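/- arXiv:1012.2130 — 6 statements merged into one kernel-verified Lean document; each statement's English description precedes it below -/
import Mathlib

section
/- Let G be a finite group and {U^μ}_μ a complete set of pairwise inequivalent irreducible unitary representations of G over ℂ, with U^μ : G → U(d_μ). Equip L²(G) = (G → ℂ) with the inner product ⟨f₁,f₂⟩ := (1/|G|) Σ_{h∈G} conj(f₁(h)) f₂(h) and the left-regular representation (T_g f)(h) := f(g⁻¹h). Define V : L²(G) → ⊕_μ ℂ^{d_μ}⊗ℂ^{d_μ} by (V f)_μ := (√d_μ/|G|) Σ_{h∈G} f(h) |U^μ(h)⟩⟩. Then V is a unitary isomorphism of Hilbert spaces and V ∘ T_g = (⊕_μ U^μ(g) ⊗ I_{d_μ}) ∘ V for every g ∈ G. -/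
open Matrix Kronecker

noncomputable section

/-- A matrix representation is irreducible iff its commutant consists of scalars
(Schur's criterion, which over `ℂ` is equivalent to irreducibility). -/
def IsIrrep {G : Type} [Group G] {n : ℕ} (U : G →* Matrix.unitaryGroup (Fin n) ℂ) : Prop :=
  ∀ T : Matrix (Fin n) (Fin n) ℂ,
    (∀ g : G, T * (U g : Matrix (Fin n) (Fin n) ℂ) = (U g : Matrix (Fin n) (Fin n) ℂ) * T) →
    ∃ c : ℂ, T = c • (1 : Matrix (Fin n) (Fin n) ℂ)

/-- Equivalence of two matrix representations: an invertible intertwiner exists. -/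
def RepEquiv {G : Type} [Group G] {n m : ℕ} (U : G →* Matrix.unitaryGroup (Fin n) ℂ)
    (V : G →* Matrix.unitaryGroup (Fin m) ℂ) : Prop :=
  ∃ T : Matrix (Fin m) (Fin n) ℂ, Function.Bijective T.mulVec ∧
    ∀ g : G, T * (U g : Matrix (Fin n) (Fin n) ℂ) = (V g : Matrix (Fin m) (Fin m) ℂ) * T

/-- The block-diagonal representation `Ũ(g) = ⊕_μ U^μ(g) ⊗ I_{d_μ}`
on `⊕_μ ℂ^{d_μ} ⊗ ℂ^{d_μ}`. -/
def Utilde {G : Type} [Group G] {ι : Type} [Fintype ι] [DecidableEq ι] (d : ι → ℕ)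
    (U : ∀ μ, G →* Matrix.unitaryGroup (Fin (d μ)) ℂ) (g : G) :
    Matrix (Σ μ, Fin (d μ) × Fin (d μ)) (Σ μ, Fin (d μ) × Fin (d μ)) ℂ :=
  Matrix.blockDiagonal'
    (fun μ => (U μ g : Matrix (Fin (d μ)) (Fin (d μ)) ℂ) ⊗ₖ (1 : Matrix (Fin (d μ)) (Fin (d μ)) ℂ))

namespace Stmt4Aux

set_option linter.unusedSectionVars false

variable {G : Type} [Group G] [Fintype G] [DecidableEq G]

lemma inv_entry {m : ℕ} (Uν : G →* Matrix.unitaryGroup (Fin m) ℂ) (h : G) (l j : Fin m) :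
    (Uν h⁻¹ : Matrix (Fin m) (Fin m) ℂ) l j = star ((Uν h : Matrix (Fin m) (Fin m) ℂ) j l) := by
  rw [map_inv, Matrix.UnitaryGroup.inv_val, Matrix.star_apply]

lemma triple_apply {n m : ℕ} (A : Matrix (Fin n) (Fin n) ℂ) (B : Matrix (Fin m) (Fin m) ℂ)
    (k : Fin n) (l : Fin m) (i : Fin n) (j : Fin m) :
    (A * Matrix.single k l (1 : ℂ) * B) i j = A i k * B l j := by
  rw [Matrix.mul_apply]
  have key : ∀ b : Fin m, (A * Matrix.single k l (1 : ℂ)) i b * B b j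
      = if b = l then A i k * B b j else 0 := by
    intro b
    rw [Matrix.mul_apply]
    rcases eq_or_ne b l with hb | hb
    · subst hb
      rw [if_pos rfl]
      have : ∀ x : Fin n, A i x * Matrix.single k b (1 : ℂ) x b
          = if x = k then A i x else 0 := by
        intro x
        rcases eq_or_ne x k with hx | hx
        · subst hx
          rw [if_pos rfl, Matrix.single_apply_same, mul_one]
        · rw [if_neg hx, Matrix.single_apply_of_ne, mul_zero]
          exact fun hcon => hx hcon.1.symm
      rw [Finset.sum_congr rfl fun x _ => this x, Finset.sum_ite_eq' Finset.univ k (fun x => A i x),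
        if_pos (Finset.mem_univ k)]
    · rw [if_neg hb]
      have : ∀ x : Fin n, A i x * Matrix.single k l (1 : ℂ) x b = 0 := by
        intro x
        rw [Matrix.single_apply_of_ne, mul_zero]
        exact fun hcon => hb hcon.2.symm
      rw [Finset.sum_congr rfl fun x _ => this x, Finset.sum_const_zero, zero_mul]
  rw [Finset.sum_congr rfl fun b _ => key b,
    Finset.sum_ite_eq' Finset.univ l (fun b => A i k * B b j), if_pos (Finset.mem_univ l)]

lemma avg_intertwine {n m : ℕ} (Uμ : G →* Matrix.unitaryGroup (Fin n) ℂ)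
    (Uν : G →* Matrix.unitaryGroup (Fin m) ℂ) (E : Matrix (Fin m) (Fin n) ℂ) (g : G) :
    (∑ h : G, (Uν h : Matrix (Fin m) (Fin m) ℂ) * E * (Uμ h⁻¹ : Matrix (Fin n) (Fin n) ℂ)) *
      (Uμ g : Matrix (Fin n) (Fin n) ℂ)
    = (Uν g : Matrix (Fin m) (Fin m) ℂ) *
      ∑ h : G, (Uν h : Matrix (Fin m) (Fin m) ℂ) * E * (Uμ h⁻¹ : Matrix (Fin n) (Fin n) ℂ) := by
  rw [Matrix.sum_mul, Matrix.mul_sum]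
  refine Fintype.sum_equiv (Equiv.mulLeft g⁻¹) _ _ fun h => ?_
  simp only [Equiv.coe_mulLeft]
  calc (Uν h : Matrix (Fin m) (Fin m) ℂ) * E * (Uμ h⁻¹ : Matrix (Fin n) (Fin n) ℂ) *
        (Uμ g : Matrix (Fin n) (Fin n) ℂ)
      = (Uν h : Matrix (Fin m) (Fin m) ℂ) * E *
        ((Uμ h⁻¹ : Matrix (Fin n) (Fin n) ℂ) * (Uμ g : Matrix (Fin n) (Fin n) ℂ)) := by
        rw [Matrix.mul_assoc]
    _ = (Uν h : Matrix (Fin m) (Fin m) ℂ) * E * (Uμ (h⁻¹ * g) : Matrix (Fin n) (Fin n) ℂ) := by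
        rw [← Matrix.UnitaryGroup.mul_val, ← _root_.map_mul]
    _ = ((Uν g : Matrix (Fin m) (Fin m) ℂ) * (Uν (g⁻¹ * h) : Matrix (Fin m) (Fin m) ℂ)) * E *
        (Uμ ((g⁻¹ * h)⁻¹) : Matrix (Fin n) (Fin n) ℂ) := by
        rw [← Matrix.UnitaryGroup.mul_val, ← _root_.map_mul, mul_inv_cancel_left, _root_.mul_inv_rev, inv_inv]
    _ = (Uν g : Matrix (Fin m) (Fin m) ℂ) * ((Uν (g⁻¹ * h) : Matrix (Fin m) (Fin m) ℂ) * E *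
        (Uμ ((g⁻¹ * h)⁻¹) : Matrix (Fin n) (Fin n) ℂ)) := by
        rw [Matrix.mul_assoc ((Uν g : Matrix (Fin m) (Fin m) ℂ)),
          Matrix.mul_assoc ((Uν g : Matrix (Fin m) (Fin m) ℂ))]

lemma hom_eq_zero {n m : ℕ} {Uμ : G →* Matrix.unitaryGroup (Fin n) ℂ}
    {Uν : G →* Matrix.unitaryGroup (Fin m) ℂ}
    (hirrμ : IsIrrep Uμ) (hirrν : IsIrrep Uν) (hne : ¬ RepEquiv Uμ Uν)
    (T : Matrix (Fin m) (Fin n) ℂ)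
    (hT : ∀ g : G, T * (Uμ g : Matrix (Fin n) (Fin n) ℂ) = (Uν g : Matrix (Fin m) (Fin m) ℂ) * T) :
    T = 0 := by
  by_contra hT0
  have hT' : ∀ g : G, Tᴴ * (Uν g : Matrix (Fin m) (Fin m) ℂ)
      = (Uμ g : Matrix (Fin n) (Fin n) ℂ) * Tᴴ := by
    intro g
    have h1 : ((Uμ g⁻¹ : Matrix (Fin n) (Fin n) ℂ))ᴴ = (Uμ g : Matrix (Fin n) (Fin n) ℂ) := by
      rw [map_inv, Matrix.UnitaryGroup.inv_val, Matrix.star_eq_conjTranspose,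
        Matrix.conjTranspose_conjTranspose]
    have h2 : ((Uν g⁻¹ : Matrix (Fin m) (Fin m) ℂ))ᴴ = (Uν g : Matrix (Fin m) (Fin m) ℂ) := by
      rw [map_inv, Matrix.UnitaryGroup.inv_val, Matrix.star_eq_conjTranspose,
        Matrix.conjTranspose_conjTranspose]
    have h3 := congrArg Matrix.conjTranspose (hT g⁻¹)
    rw [Matrix.conjTranspose_mul, Matrix.conjTranspose_mul, h1, h2] at h3
    exact h3.symm
  obtain ⟨c, hc⟩ := hirrμ (Tᴴ * T) (fun g => by
    rw [Matrix.mul_assoc Tᴴ T, hT g, ← Matrix.mul_assoc, hT' g, Matrix.mul_assoc])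
  obtain ⟨c', hc'⟩ := hirrν (T * Tᴴ) (fun g => by
    rw [Matrix.mul_assoc T Tᴴ, hT' g, ← Matrix.mul_assoc, hT g, Matrix.mul_assoc])
  obtain ⟨p, q, hpq⟩ : ∃ p q, T p q ≠ 0 := by
    by_contra hcon
    push_neg at hcon
    exact hT0 (Matrix.ext fun p q => hcon p q)
  have hcq : c = ∑ p', (Complex.normSq (T p' q) : ℂ) := by
    have h1 : (Tᴴ * T) q q = c := by
      rw [hc]; simp [Matrix.one_apply]
    rw [← h1, Matrix.mul_apply]
    refine Finset.sum_congr rfl fun p' _ => ?_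
    rw [Matrix.conjTranspose_apply]
    exact (Complex.normSq_eq_conj_mul_self).symm
  have hc0 : c ≠ 0 := by
    rw [hcq, ← Complex.ofReal_sum, Complex.ofReal_ne_zero]
    have : 0 < ∑ p', Complex.normSq (T p' q) :=
      Finset.sum_pos' (fun _ _ => Complex.normSq_nonneg _)
        ⟨p, Finset.mem_univ p, Complex.normSq_pos.mpr hpq⟩
    exact ne_of_gt this
  have hcp : c' = ∑ q', (Complex.normSq (T p q') : ℂ) := by
    have h1 : (T * Tᴴ) p p = c' := by
      rw [hc']; simp [Matrix.one_apply]
    rw [← h1, Matrix.mul_apply]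
    refine Finset.sum_congr rfl fun q' _ => ?_
    rw [Matrix.conjTranspose_apply]
    exact Complex.mul_conj _
  have hc'0 : c' ≠ 0 := by
    rw [hcp, ← Complex.ofReal_sum, Complex.ofReal_ne_zero]
    have : 0 < ∑ q', Complex.normSq (T p q') :=
      Finset.sum_pos' (fun _ _ => Complex.normSq_nonneg _)
        ⟨q, Finset.mem_univ q, Complex.normSq_pos.mpr hpq⟩
    exact ne_of_gt this
  apply hne
  refine ⟨T, ⟨?_, ?_⟩, hT⟩
  · intro a b hab
    have h0 : T.mulVec (a - b) = 0 := by
      rw [Matrix.mulVec_sub, hab, sub_self]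
    have h1 : (Tᴴ * T).mulVec (a - b) = 0 := by
      rw [← Matrix.mulVec_mulVec, h0, Matrix.mulVec_zero]
    rw [hc, Matrix.smul_mulVec, Matrix.one_mulVec, smul_eq_zero] at h1
    rcases h1 with h1 | h1
    · exact absurd h1 hc0
    · exact sub_eq_zero.mp h1
  · intro w
    refine ⟨c'⁻¹ • Tᴴ.mulVec w, ?_⟩
    rw [Matrix.mulVec_smul, Matrix.mulVec_mulVec, hc', Matrix.smul_mulVec,
      Matrix.one_mulVec, smul_smul, inv_mul_cancel₀ hc'0, one_smul]

lemma ortho_ne {n m : ℕ} {Uμ : G →* Matrix.unitaryGroup (Fin n) ℂ}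
    {Uν : G →* Matrix.unitaryGroup (Fin m) ℂ}
    (hirrμ : IsIrrep Uμ) (hirrν : IsIrrep Uν) (hne : ¬ RepEquiv Uν Uμ)
    (i k : Fin n) (j l : Fin m) :
    ∑ h : G, (Uμ h : Matrix (Fin n) (Fin n) ℂ) i k *
      star ((Uν h : Matrix (Fin m) (Fin m) ℂ) j l) = 0 := by
  have h0 := hom_eq_zero hirrν hirrμ hne
    (∑ h : G, (Uμ h : Matrix (Fin n) (Fin n) ℂ) * Matrix.single k l (1 : ℂ) *
      (Uν h⁻¹ : Matrix (Fin m) (Fin m) ℂ))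
    (avg_intertwine Uν Uμ _)
  have h1 := congrFun (congrFun h0 i) j
  rw [Matrix.sum_apply] at h1
  simp only [Matrix.zero_apply] at h1
  rw [← h1]
  refine Finset.sum_congr rfl fun h _ => ?_
  rw [triple_apply, inv_entry]

lemma trace_std {n : ℕ} (k l : Fin n) :
    Matrix.trace (Matrix.single k l (1 : ℂ)) = if k = l then 1 else 0 := by
  rcases eq_or_ne k l with hkl | hkl
  · subst hkl
    rw [if_pos rfl, Matrix.trace.eq_1]
    have : ∀ p : Fin n, Matrix.diag (Matrix.single k k (1 : ℂ)) p
        = if p = k then 1 else 0 := by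
      intro p
      rcases eq_or_ne p k with hp | hp
      · subst hp; rw [if_pos rfl, Matrix.diag_apply, Matrix.single_apply_same]
      · rw [if_neg hp, Matrix.diag_apply, Matrix.single_apply_of_ne]
        exact fun hcon => hp hcon.1.symm
    rw [Finset.sum_congr rfl fun p _ => this p,
      Finset.sum_ite_eq' Finset.univ k (fun _ => (1 : ℂ)), if_pos (Finset.mem_univ k)]
  · rw [if_neg hkl, Matrix.trace.eq_1]
    refine Finset.sum_eq_zero fun p _ => ?_
    rw [Matrix.diag_apply, Matrix.single_apply_of_ne]
    exact fun hcon => hkl (hcon.1.trans hcon.2.symm)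

lemma ortho_eq {n : ℕ} {Uμ : G →* Matrix.unitaryGroup (Fin n) ℂ}
    (hirrμ : IsIrrep Uμ) (i k j l : Fin n) :
    ∑ h : G, (Uμ h : Matrix (Fin n) (Fin n) ℂ) i k *
      star ((Uμ h : Matrix (Fin n) (Fin n) ℂ) j l)
    = ((Fintype.card G : ℂ) / (n : ℂ)) * (if i = j then 1 else 0) *
      (if k = l then 1 else 0) := by
  have hn0 : (n : ℂ) ≠ 0 := Nat.cast_ne_zero.mpr i.pos.ne'
  obtain ⟨c, hc⟩ := hirrμ
    (∑ h : G, (Uμ h : Matrix (Fin n) (Fin n) ℂ) * Matrix.single k l (1 : ℂ) *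
      (Uμ h⁻¹ : Matrix (Fin n) (Fin n) ℂ))
    (avg_intertwine Uμ Uμ _)
  have htr : Matrix.trace (∑ h : G, (Uμ h : Matrix (Fin n) (Fin n) ℂ) *
      Matrix.single k l (1 : ℂ) * (Uμ h⁻¹ : Matrix (Fin n) (Fin n) ℂ))
      = (Fintype.card G : ℂ) * (if k = l then 1 else 0) := by
    rw [Matrix.trace_sum]
    have key : ∀ h : G, Matrix.trace ((Uμ h : Matrix (Fin n) (Fin n) ℂ) *
        Matrix.single k l (1 : ℂ) * (Uμ h⁻¹ : Matrix (Fin n) (Fin n) ℂ))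
        = (if k = l then 1 else 0) := by
      intro h
      have h1 : (Uμ h⁻¹ : Matrix (Fin n) (Fin n) ℂ) * (Uμ h : Matrix (Fin n) (Fin n) ℂ) = 1 := by
        rw [← Matrix.UnitaryGroup.mul_val, ← _root_.map_mul, inv_mul_cancel, _root_.map_one,
          Matrix.UnitaryGroup.one_val]
      rw [Matrix.trace_mul_cycle, h1, Matrix.one_mul, trace_std]
    rw [Finset.sum_congr rfl fun h _ => key h, Finset.sum_const, Finset.card_univ, nsmul_eq_mul]
  have htr2 : Matrix.trace (∑ h : G, (Uμ h : Matrix (Fin n) (Fin n) ℂ) *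
      Matrix.single k l (1 : ℂ) * (Uμ h⁻¹ : Matrix (Fin n) (Fin n) ℂ))
      = c * (n : ℂ) := by
    rw [hc, Matrix.trace_smul, Matrix.trace_one, Fintype.card_fin, smul_eq_mul]
  have hcval : c = (Fintype.card G : ℂ) * (if k = l then 1 else 0) / (n : ℂ) := by
    rw [eq_div_iff hn0]
    exact htr2.symm.trans htr
  have hent := congrFun (congrFun hc i) j
  rw [Matrix.sum_apply] at hent
  have hTij : ∑ h : G, ((Uμ h : Matrix (Fin n) (Fin n) ℂ) * Matrix.single k l (1 : ℂ) *
      (Uμ h⁻¹ : Matrix (Fin n) (Fin n) ℂ)) i j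
      = ∑ h : G, (Uμ h : Matrix (Fin n) (Fin n) ℂ) i k *
        star ((Uμ h : Matrix (Fin n) (Fin n) ℂ) j l) := by
    refine Finset.sum_congr rfl fun h _ => ?_
    rw [triple_apply, inv_entry]
  rw [hTij] at hent
  rw [hent, Matrix.smul_apply, Matrix.one_apply, hcval, smul_eq_mul]
  ring

end Stmt4Aux

/-- Fourier–Plancherel unitarity for a finite group: given a complete family of pairwise
inequivalent irreducible unitary representations (completeness: `Σ_μ d_μ² = |G|`), the map
`(V f)_μ = (√d_μ/|G|) Σ_h f(h) |U^μ(h)⟩⟩` is a unitary isomorphism from `L²(G)` (with inner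
product `⟨f₁,f₂⟩ = |G|⁻¹ Σ_h conj(f₁ h) f₂ h`) onto `⊕_μ ℂ^{d_μ}⊗ℂ^{d_μ}`, intertwining the
left-regular representation with `⊕_μ U^μ(g) ⊗ I_{d_μ}`. -/
theorem stmt4 {G : Type} [Group G] [Fintype G] [DecidableEq G]
    {ι : Type} [Fintype ι] [DecidableEq ι] (d : ι → ℕ)
    (U : ∀ μ, G →* Matrix.unitaryGroup (Fin (d μ)) ℂ)
    (hirr : ∀ μ, IsIrrep (U μ))
    (hineq : Pairwise fun μ ν => ¬ RepEquiv (U μ) (U ν))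
    (hcomplete : ∑ μ, (d μ) ^ 2 = Fintype.card G)
    (V : (G → ℂ) → ((Σ μ, Fin (d μ) × Fin (d μ)) → ℂ))
    (hV : ∀ (f : G → ℂ) (μ : ι) (i j : Fin (d μ)),
      V f ⟨μ, (i, j)⟩ = ((Real.sqrt (d μ) / (Fintype.card G : ℝ) : ℝ) : ℂ) *
        ∑ h : G, f h * (U μ h : Matrix (Fin (d μ)) (Fin (d μ)) ℂ) i j) :
    Function.Bijective V ∧
    (∀ f₁ f₂ : G → ℂ,
      (∑ x, star (V f₁ x) * V f₂ x)
        = (Fintype.card G : ℂ)⁻¹ * ∑ h : G, star (f₁ h) * f₂ h) ∧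
    (∀ (g : G) (f : G → ℂ),
      V (fun h => f (g⁻¹ * h)) = (Utilde d U g).mulVec (V f)) := by
  classical
  have hnG0 : ((Fintype.card G : ℕ) : ℂ) ≠ 0 := Nat.cast_ne_zero.mpr Fintype.card_ne_zero
  set M : Matrix (Σ μ, Fin (d μ) × Fin (d μ)) G ℂ :=
    fun x h => (Real.sqrt (d x.1) : ℂ) *
      (U x.1 h : Matrix (Fin (d x.1)) (Fin (d x.1)) ℂ) x.2.1 x.2.2 with hMdef
  have hMapply : ∀ (μ : ι) (i j : Fin (d μ)) (h : G),
      M ⟨μ, (i, j)⟩ h = (Real.sqrt (d μ) : ℂ) *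
        (U μ h : Matrix (Fin (d μ)) (Fin (d μ)) ℂ) i j := fun _ _ _ _ => rfl
  -- row orthonormality
  have hMMH : M * Mᴴ = ((Fintype.card G : ℕ) : ℂ) •
      (1 : Matrix (Σ μ, Fin (d μ) × Fin (d μ)) (Σ μ, Fin (d μ) × Fin (d μ)) ℂ) := by
    ext x y
    rcases x with ⟨μ, i, j⟩
    rcases y with ⟨ν, k, l⟩
    rw [Matrix.mul_apply]
    have hterm : ∀ h : G, M ⟨μ, (i, j)⟩ h * Mᴴ h ⟨ν, (k, l)⟩
        = ((Real.sqrt (d μ) : ℂ) * (Real.sqrt (d ν) : ℂ)) *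
          ((U μ h : Matrix (Fin (d μ)) (Fin (d μ)) ℂ) i j *
            star ((U ν h : Matrix (Fin (d ν)) (Fin (d ν)) ℂ) k l)) := by
      intro h
      rw [Matrix.conjTranspose_apply, hMapply, hMapply, star_mul']
      have : star ((Real.sqrt (d ν) : ℂ)) = (Real.sqrt (d ν) : ℂ) := by
        rw [Complex.star_def, Complex.conj_ofReal]
      rw [this]
      ring
    rw [Finset.sum_congr rfl fun h _ => hterm h, ← Finset.mul_sum]
    rcases eq_or_ne μ ν with hμν | hμν
    · subst hμν
      rw [Stmt4Aux.ortho_eq (hirr μ) i j k l]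
      have hd : (Real.sqrt (d μ) : ℂ) * (Real.sqrt (d μ) : ℂ) = ((d μ : ℕ) : ℂ) := by
        rw [← Complex.ofReal_mul, Real.mul_self_sqrt (Nat.cast_nonneg _)]
        norm_cast
      have hdμ0 : ((d μ : ℕ) : ℂ) ≠ 0 := Nat.cast_ne_zero.mpr i.pos.ne'
      have hone : (1 : Matrix (Σ μ, Fin (d μ) × Fin (d μ)) (Σ μ, Fin (d μ) × Fin (d μ)) ℂ)
          ⟨μ, (i, j)⟩ ⟨μ, (k, l)⟩
          = (if i = k then 1 else 0) * (if j = l then 1 else 0) := by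
        rw [Matrix.one_apply]
        rcases eq_or_ne i k with hik | hik <;> rcases eq_or_ne j l with hjl | hjl <;>
          simp [hik, hjl]
      rw [hd, Matrix.smul_apply, hone, smul_eq_mul]
      field_simp
      try (split_ifs <;> ring)
    · rw [Stmt4Aux.ortho_ne (hirr μ) (hirr ν) (hineq (Ne.symm hμν)) i j k l, mul_zero,
        Matrix.smul_apply, Matrix.one_apply,
        if_neg (fun hEq => hμν (congrArg Sigma.fst hEq))]
      simp
  -- column orthonormality via a dimension count
  have hcard : Fintype.card (Σ μ, Fin (d μ) × Fin (d μ)) = Fintype.card G := by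
    rw [← hcomplete]
    simp [Fintype.card_sigma, sq]
  have hMHM : Mᴴ * M = ((Fintype.card G : ℕ) : ℂ) • (1 : Matrix G G ℂ) := by
    have e : (Σ μ, Fin (d μ) × Fin (d μ)) ≃ G := Fintype.equivOfCardEq hcard
    have h1 : M * (((Fintype.card G : ℕ) : ℂ)⁻¹ • Mᴴ) = 1 := by
      rw [Matrix.mul_smul, hMMH, smul_smul, inv_mul_cancel₀ hnG0, one_smul]
    have h2 := (Matrix.mul_eq_one_comm_of_equiv e).mp h1
    calc Mᴴ * M = ((Fintype.card G : ℕ) : ℂ) •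
          ((((Fintype.card G : ℕ) : ℂ)⁻¹ • Mᴴ) * M) := by
          rw [Matrix.smul_mul, smul_smul, mul_inv_cancel₀ hnG0, one_smul]
      _ = ((Fintype.card G : ℕ) : ℂ) • (1 : Matrix G G ℂ) := by rw [h2]
  -- V as a matrix
  have hVM : ∀ f : G → ℂ, V f = ((Fintype.card G : ℕ) : ℂ)⁻¹ • M.mulVec f := by
    intro f
    funext x
    rcases x with ⟨μ, i, j⟩
    rw [hV f μ i j, Pi.smul_apply, smul_eq_mul]
    have : M.mulVec f ⟨μ, (i, j)⟩ = ∑ h : G, ((Real.sqrt (d μ) : ℂ) *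
        (U μ h : Matrix (Fin (d μ)) (Fin (d μ)) ℂ) i j) * f h := by
      rfl
    rw [this, Finset.mul_sum, Finset.mul_sum]
    refine Finset.sum_congr rfl fun h _ => ?_
    push_cast
    ring
  refine ⟨Function.bijective_iff_has_inverse.mpr ⟨fun w => Mᴴ.mulVec w, ?_, ?_⟩, ?_, ?_⟩
  · intro f
    show Mᴴ.mulVec (V f) = f
    rw [hVM f, Matrix.mulVec_smul, Matrix.mulVec_mulVec, hMHM, Matrix.smul_mulVec,
      Matrix.one_mulVec, smul_smul, inv_mul_cancel₀ hnG0, one_smul]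
  · intro w
    rw [hVM _, Matrix.mulVec_mulVec, hMMH, Matrix.smul_mulVec, Matrix.one_mulVec,
      smul_smul, inv_mul_cancel₀ hnG0, one_smul]
  · intro f₁ f₂
    have h1 : ∑ x, star (V f₁ x) * V f₂ x = star (V f₁) ⬝ᵥ V f₂ := rfl
    have hstar : star (((Fintype.card G : ℕ) : ℂ)⁻¹) = ((Fintype.card G : ℕ) : ℂ)⁻¹ := by
      simp
    have hkey : ((Fintype.card G : ℕ) : ℂ)⁻¹ * ((Fintype.card G : ℕ) : ℂ)⁻¹ *
        ((Fintype.card G : ℕ) : ℂ) = ((Fintype.card G : ℕ) : ℂ)⁻¹ := by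
      field_simp
    rw [h1, hVM f₁, hVM f₂, star_smul, hstar, smul_dotProduct, dotProduct_smul,
      Matrix.star_mulVec, ← Matrix.dotProduct_mulVec, Matrix.mulVec_mulVec, hMHM,
      Matrix.smul_mulVec, Matrix.one_mulVec, dotProduct_smul,
      smul_smul, smul_smul, hkey, smul_eq_mul]
    rfl
  · intro g f
    funext x
    rcases x with ⟨μ, i, j⟩
    have hRHS : (Utilde d U g).mulVec (V f) ⟨μ, (i, j)⟩
        = ∑ k : Fin (d μ), (U μ g : Matrix (Fin (d μ)) (Fin (d μ)) ℂ) i k * V f ⟨μ, (k, j)⟩ := by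
      have hexp : (Utilde d U g).mulVec (V f) ⟨μ, (i, j)⟩
          = ∑ ν : ι, ∑ p : Fin (d ν) × Fin (d ν),
            Utilde d U g ⟨μ, (i, j)⟩ ⟨ν, p⟩ * V f ⟨ν, p⟩ := by
        rw [show (Utilde d U g).mulVec (V f) ⟨μ, (i, j)⟩
          = ∑ y : Σ ν, Fin (d ν) × Fin (d ν), Utilde d U g ⟨μ, (i, j)⟩ y * V f y from rfl]
        rw [← Finset.univ_sigma_univ, Finset.sum_sigma]
      rw [hexp]
      rw [Finset.sum_eq_single μ
        (fun ν _ hν => Finset.sum_eq_zero fun p _ => by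
          rw [Utilde, Matrix.blockDiagonal'_apply_ne _ _ _ (Ne.symm hν), zero_mul])
        (fun hμ => absurd (Finset.mem_univ μ) hμ)]
      rw [Fintype.sum_prod_type]
      refine Finset.sum_congr rfl fun k _ => ?_
      have hentry : ∀ l : Fin (d μ), Utilde d U g ⟨μ, (i, j)⟩ ⟨μ, (k, l)⟩
          = (U μ g : Matrix (Fin (d μ)) (Fin (d μ)) ℂ) i k *
            (if j = l then 1 else 0) := by
        intro l
        rw [Utilde, Matrix.blockDiagonal'_apply_eq]
        rw [Matrix.kronecker_apply, Matrix.one_apply]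
      rw [Finset.sum_congr rfl fun l _ => by rw [hentry l]]
      rw [Finset.sum_congr rfl (fun l _ => by
        rw [mul_ite, mul_one, mul_zero, ite_mul, zero_mul])]
      rw [Finset.sum_ite_eq Finset.univ j
        (fun l => (U μ g : Matrix (Fin (d μ)) (Fin (d μ)) ℂ) i k * V f ⟨μ, (k, l)⟩),
        if_pos (Finset.mem_univ j)]
    have hre : ∑ h : G, f (g⁻¹ * h) * (U μ h : Matrix (Fin (d μ)) (Fin (d μ)) ℂ) i j
        = ∑ h : G, f h * (U μ (g * h) : Matrix (Fin (d μ)) (Fin (d μ)) ℂ) i j := by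
      refine Fintype.sum_equiv (Equiv.mulLeft g⁻¹) _ _ fun h => ?_
      simp only [Equiv.coe_mulLeft]
      rw [mul_inv_cancel_left]
    have hmul : ∀ h : G, (U μ (g * h) : Matrix (Fin (d μ)) (Fin (d μ)) ℂ) i j
        = ∑ k : Fin (d μ), (U μ g : Matrix (Fin (d μ)) (Fin (d μ)) ℂ) i k *
          (U μ h : Matrix (Fin (d μ)) (Fin (d μ)) ℂ) k j := by
      intro h
      rw [_root_.map_mul, Matrix.UnitaryGroup.mul_val, Matrix.mul_apply]
    rw [hV _ μ i j, hRHS]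
    calc ((Real.sqrt (d μ) / (Fintype.card G : ℝ) : ℝ) : ℂ) *
          ∑ h : G, f (g⁻¹ * h) * (U μ h : Matrix (Fin (d μ)) (Fin (d μ)) ℂ) i j
        = ∑ h : G, ∑ k : Fin (d μ), ((Real.sqrt (d μ) / (Fintype.card G : ℝ) : ℝ) : ℂ) *
            f h * ((U μ g : Matrix (Fin (d μ)) (Fin (d μ)) ℂ) i k *
              (U μ h : Matrix (Fin (d μ)) (Fin (d μ)) ℂ) k j) := by
          rw [hre, Finset.mul_sum]
          refine Finset.sum_congr rfl fun h _ => ?_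
          rw [hmul h, Finset.mul_sum, Finset.mul_sum]
          refine Finset.sum_congr rfl fun k _ => by ring
      _ = ∑ k : Fin (d μ), ∑ h : G, ((Real.sqrt (d μ) / (Fintype.card G : ℝ) : ℝ) : ℂ) *
            f h * ((U μ g : Matrix (Fin (d μ)) (Fin (d μ)) ℂ) i k *
              (U μ h : Matrix (Fin (d μ)) (Fin (d μ)) ℂ) k j) := Finset.sum_comm
      _ = ∑ k : Fin (d μ), (U μ g : Matrix (Fin (d μ)) (Fin (d μ)) ℂ) i k * V f ⟨μ, (k, j)⟩ := by
          refine Finset.sum_congr rfl fun k _ => ?_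
          rw [hV f μ k j, Finset.mul_sum, Finset.mul_sum]
          refine Finset.sum_congr rfl fun h _ => by ring

end
end

section
/- Let G be a finite group, U : G → U(d) a unitary representation, c : G×G → ℝ a left-invariant cost function (c(hĝ,hg) = c(ĝ,g) for all h,ĝ,g), ρ a state on ℂ^d, and Q a POVM on G. Define P_ĝ := (1/|G|) Σ_{h∈G} U(h)† Q_{hĝ} U(h). Then: (i) P is a POVM covariant with respect to U (P_{gĝ} = U(g)P_ĝU(g)†); (ii) the pointwise cost c(ρ,P|g) is the same for every g ∈ G; (iii) c_ave(ρ,P) = c_ave(ρ,Q); (iv) c_wc(ρ,P) ≤ c_wc(ρ,Q). In particular c_ave(ρ,P) = c_wc(ρ,P) = c(ρ,P|g) for all g. -/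
open Matrix Kronecker ComplexOrder

noncomputable section

/-- Pointwise cost `c(ρ,P|g) = Σ_ĝ c(ĝ,g)·Tr[P_ĝ W(g) ρ W(g)†]` of an estimation strategy. -/
def pCost {G : Type} [Group G] [Fintype G] {n : Type} [Fintype n]
    (W : G → Matrix n n ℂ) (c : G → G → ℝ) (ρ : Matrix n n ℂ)
    (P : G → Matrix n n ℂ) (g : G) : ℝ :=
  ∑ ghat : G, c ghat g * (Matrix.trace (P ghat * (W g * ρ * (W g)ᴴ))).re

/-- Average cost `c_ave(ρ,P) = |G|⁻¹ Σ_g c(ρ,P|g)`. -/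
def aCost {G : Type} [Group G] [Fintype G] {n : Type} [Fintype n]
    (W : G → Matrix n n ℂ) (c : G → G → ℝ) (ρ : Matrix n n ℂ)
    (P : G → Matrix n n ℂ) : ℝ :=
  (Fintype.card G : ℝ)⁻¹ * ∑ g : G, pCost W c ρ P g

/-- Worst-case cost `c_wc(ρ,P) = max_g c(ρ,P|g)`. -/
def wCost {G : Type} [Group G] [Fintype G] {n : Type} [Fintype n]
    (W : G → Matrix n n ℂ) (c : G → G → ℝ) (ρ : Matrix n n ℂ)
    (P : G → Matrix n n ℂ) : ℝ :=
  Finset.univ.sup' ⟨(1 : G), Finset.mem_univ _⟩ (pCost W c ρ P)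

lemma myPsdAdd {n : Type} [Fintype n] {A B : Matrix n n ℂ}
    (hA : A.PosSemidef) (hB : B.PosSemidef) : (A + B).PosSemidef := by
  exact hA.add hB

lemma myPsdSum {n ι : Type} [Fintype n] (s : Finset ι) (f : ι → Matrix n n ℂ)
    (h : ∀ i ∈ s, (f i).PosSemidef) : (∑ i ∈ s, f i).PosSemidef := by
  classical
  induction s using Finset.induction_on with
  | empty => simpa using Matrix.PosSemidef.zero
  | insert _ _ hx ih =>
    rw [Finset.sum_insert hx]
    exact myPsdAdd (h _ (Finset.mem_insert_self _ _))
      (ih fun i hi => h _ (Finset.mem_insert_of_mem hi))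

lemma myPsdSmul {n : Type} [Fintype n] {M : Matrix n n ℂ} (hM : M.PosSemidef)
    {r : ℝ} (hr : 0 ≤ r) : ((r : ℂ) • M).PosSemidef := by
  constructor
  · show ((r:ℂ) • M)ᴴ = _
    rw [Matrix.conjTranspose_smul, Complex.star_def, Complex.conj_ofReal, hM.1]
  · exact (hM.smul (a := (r:ℂ)) (by exact_mod_cast hr)).2

/-- Group-averaging a POVM for a left-invariant cost function: the averaged POVM
`P_ĝ := |G|⁻¹ Σ_h U(h)† Q_{hĝ} U(h)` is covariant, has constant pointwise cost, the same
average cost as `Q`, and worst-case cost no larger than that of `Q`; in particular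
`c_ave(ρ,P) = c_wc(ρ,P) = c(ρ,P|g)` for every `g`. -/
theorem stmt8 {G : Type} [Group G] [Fintype G] [DecidableEq G] {d : ℕ}
    (U : G →* Matrix.unitaryGroup (Fin d) ℂ)
    (c : G → G → ℝ) (hc : ∀ h ghat g : G, c (h * ghat) (h * g) = c ghat g)
    (ρ : Matrix (Fin d) (Fin d) ℂ) (hρ : ρ.PosSemidef) (hρtr : ρ.trace = 1)
    (Q : G → Matrix (Fin d) (Fin d) ℂ)
    (hQpos : ∀ ghat, (Q ghat).PosSemidef) (hQsum : ∑ ghat, Q ghat = 1)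
    (P : G → Matrix (Fin d) (Fin d) ℂ)
    (hP : ∀ ghat : G, P ghat = (Fintype.card G : ℂ)⁻¹ •
      ∑ h : G, (U h : Matrix (Fin d) (Fin d) ℂ)ᴴ * Q (h * ghat)
        * (U h : Matrix (Fin d) (Fin d) ℂ)) :
    (∀ ghat, (P ghat).PosSemidef) ∧ (∑ ghat, P ghat = 1) ∧
    (∀ g ghat : G, P (g * ghat)
        = (U g : Matrix (Fin d) (Fin d) ℂ) * P ghat * (U g : Matrix (Fin d) (Fin d) ℂ)ᴴ) ∧
    (∀ g g' : G,
      pCost (fun g => (U g : Matrix (Fin d) (Fin d) ℂ)) c ρ P g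
        = pCost (fun g => (U g : Matrix (Fin d) (Fin d) ℂ)) c ρ P g') ∧
    (aCost (fun g => (U g : Matrix (Fin d) (Fin d) ℂ)) c ρ P
        = aCost (fun g => (U g : Matrix (Fin d) (Fin d) ℂ)) c ρ Q) ∧
    (wCost (fun g => (U g : Matrix (Fin d) (Fin d) ℂ)) c ρ P
        ≤ wCost (fun g => (U g : Matrix (Fin d) (Fin d) ℂ)) c ρ Q) ∧
    (∀ g : G,
      aCost (fun g => (U g : Matrix (Fin d) (Fin d) ℂ)) c ρ P
          = pCost (fun g => (U g : Matrix (Fin d) (Fin d) ℂ)) c ρ P g ∧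
      wCost (fun g => (U g : Matrix (Fin d) (Fin d) ℂ)) c ρ P
          = pCost (fun g => (U g : Matrix (Fin d) (Fin d) ℂ)) c ρ P g) := by
  set W : G → Matrix (Fin d) (Fin d) ℂ := fun g => (U g : Matrix (Fin d) (Fin d) ℂ) with hWdef
  have hWmul : ∀ a b : G, W (a * b) = W a * W b := fun a b => by
    simp only [hWdef, _root_.map_mul, Submonoid.coe_mul]
  have hW1 : ∀ a : G, (W a)ᴴ * W a = 1 := fun a => by
    simpa [Matrix.star_eq_conjTranspose] using (Unitary.mem_iff.mp (U a).2).1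
  have hW2 : ∀ a : G, W a * (W a)ᴴ = 1 := fun a => by
    simpa [Matrix.star_eq_conjTranspose] using (Unitary.mem_iff.mp (U a).2).2
  have hcard : (0:ℝ) < (Fintype.card G : ℝ) := by
    exact_mod_cast Fintype.card_pos
  have hcast : ((Fintype.card G : ℂ))⁻¹ = Complex.ofReal ((Fintype.card G : ℝ)⁻¹) := by
    rw [Complex.ofReal_inv, Complex.ofReal_natCast]
  -- (i) positive semidefinite
  have hPpos : ∀ ghat, (P ghat).PosSemidef := by
    intro ghat
    rw [hP ghat, hcast]
    refine myPsdSmul (myPsdSum _ _ fun h _ => ?_) (by positivity)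
    exact (hQpos (h * ghat)).conjTranspose_mul_mul_same (W h)
  -- (ii) sums to one
  have hPsum : ∑ ghat, P ghat = 1 := by
    have hQrow : ∀ h : G, ∑ ghat, Q (h * ghat) = 1 := by
      intro h
      rw [Fintype.sum_equiv (Equiv.mulLeft h) (fun ghat => Q (h * ghat)) Q fun x => rfl]
      exact hQsum
    calc ∑ ghat, P ghat
        = (Fintype.card G : ℂ)⁻¹ • ∑ ghat, ∑ h : G, (W h)ᴴ * Q (h * ghat) * W h := by
          rw [Finset.smul_sum]; exact Finset.sum_congr rfl fun ghat _ => hP ghat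
      _ = (Fintype.card G : ℂ)⁻¹ • ∑ h : G, (W h)ᴴ * (∑ ghat, Q (h * ghat)) * W h := by
          rw [Finset.sum_comm]
          congr 1
          refine Finset.sum_congr rfl fun h _ => ?_
          rw [Finset.mul_sum, Finset.sum_mul]
      _ = 1 := by
          simp only [hQrow, mul_one, hW1, Finset.sum_const, Finset.card_univ, ← Nat.cast_smul_eq_nsmul ℂ]
          rw [smul_smul, inv_mul_cancel₀, one_smul]
          exact_mod_cast Fintype.card_ne_zero
  -- (iii) covariance
  have hcov : ∀ g ghat : G, P (g * ghat) = W g * P ghat * (W g)ᴴ := by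
    intro g ghat
    have key : (W g)ᴴ * P (g * ghat) * W g = P ghat := by
      rw [hP (g * ghat), hP ghat]
      rw [mul_smul_comm, smul_mul_assoc]
      congr 1
      rw [Finset.mul_sum, Finset.sum_mul]
      refine Fintype.sum_equiv (Equiv.mulRight g)
        (fun h => (W g)ᴴ * ((W h)ᴴ * Q (h * (g * ghat)) * W h) * W g)
        (fun h => (W h)ᴴ * Q (h * ghat) * W h) fun h => ?_
      show (W g)ᴴ * ((W h)ᴴ * Q (h * (g * ghat)) * W h) * W g
          = (W (h * g))ᴴ * Q (h * g * ghat) * W (h * g)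
      rw [hWmul, Matrix.conjTranspose_mul, mul_assoc h g ghat]
      simp only [Matrix.mul_assoc]
    have hconj : W g * ((W g)ᴴ * P (g * ghat) * W g) * (W g)ᴴ = P (g * ghat) := by
      calc W g * ((W g)ᴴ * P (g * ghat) * W g) * (W g)ᴴ
          = (W g * (W g)ᴴ) * P (g * ghat) * (W g * (W g)ᴴ) := by simp only [Matrix.mul_assoc]
        _ = P (g * ghat) := by rw [hW2, one_mul, mul_one]
    rw [← key, hconj]
  -- key cost computation
  have hS : ∀ ghat g : G, (P ghat * (W g * ρ * (W g)ᴴ)).trace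
      = (Fintype.card G : ℂ)⁻¹
        * ∑ h : G, (Q (h * ghat) * (W (h * g) * ρ * (W (h * g))ᴴ)).trace := by
    intro ghat g
    rw [hP ghat, smul_mul_assoc, Matrix.trace_smul, Finset.sum_mul, Matrix.trace_sum,
      smul_eq_mul]
    congr 1
    refine Finset.sum_congr rfl fun h _ => ?_
    rw [hWmul h g, Matrix.conjTranspose_mul]
    simp only [Matrix.mul_assoc]
    rw [Matrix.trace_mul_comm]
    simp only [Matrix.mul_assoc]
    rfl
  have hpkey : ∀ g : G, pCost W c ρ P g = aCost W c ρ Q := by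
    intro g
    have h1 : pCost W c ρ P g
        = (Fintype.card G : ℝ)⁻¹ * ∑ h : G, pCost W c ρ Q (h * g) := by
      simp only [pCost]
      rw [Finset.mul_sum]
      calc ∑ ghat : G, c ghat g * ((P ghat * (W g * ρ * (W g)ᴴ)).trace).re
          = ∑ ghat : G, ∑ h : G, (Fintype.card G : ℝ)⁻¹
              * (c ghat g * ((Q (h * ghat) * (W (h * g) * ρ * (W (h * g))ᴴ)).trace).re) := by
            refine Finset.sum_congr rfl fun ghat _ => ?_
            rw [hS ghat g, hcast, Complex.re_ofReal_mul, Complex.re_sum, Finset.mul_sum,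
              Finset.mul_sum]
            exact Finset.sum_congr rfl fun h _ => by ring
        _ = ∑ h : G, ∑ ghat : G, (Fintype.card G : ℝ)⁻¹
              * (c ghat g * ((Q (h * ghat) * (W (h * g) * ρ * (W (h * g))ᴴ)).trace).re) :=
            Finset.sum_comm
        _ = ∑ h : G, (Fintype.card G : ℝ)⁻¹ * pCost W c ρ Q (h * g) := by
            refine Finset.sum_congr rfl fun h _ => ?_
            rw [← Finset.mul_sum]
            congr 1
            simp only [pCost]
            refine Fintype.sum_equiv (Equiv.mulLeft h)
              (fun ghat => c ghat g * ((Q (h * ghat) * (W (h * g) * ρ * (W (h * g))ᴴ)).trace).re)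
              (fun k => c k (h * g) * ((Q k * (W (h * g) * ρ * (W (h * g))ᴴ)).trace).re)
              fun ghat => ?_
            simp only [Equiv.coe_mulLeft]
            rw [hc h ghat g]
    rw [h1, aCost]
    congr 1
    exact Fintype.sum_equiv (Equiv.mulRight g) (fun h => pCost W c ρ Q (h * g))
      (pCost W c ρ Q) fun h => rfl
  have haP : aCost W c ρ P = aCost W c ρ Q := by
    rw [aCost, Finset.sum_congr rfl fun g _ => hpkey g, Finset.sum_const, Finset.card_univ,
      nsmul_eq_mul, ← mul_assoc, inv_mul_cancel₀ hcard.ne', one_mul]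
  have hwP : wCost W c ρ P = aCost W c ρ Q := by
    refine le_antisymm (Finset.sup'_le _ _ fun g _ => le_of_eq (hpkey g)) ?_
    exact le_trans (le_of_eq (hpkey 1).symm) (Finset.le_sup' _ (Finset.mem_univ 1))
  have hQave_le : aCost W c ρ Q ≤ wCost W c ρ Q := by
    have hsum : ∑ g : G, pCost W c ρ Q g
        ≤ (Fintype.card G : ℝ) * wCost W c ρ Q := by
      have := Finset.sum_le_card_nsmul Finset.univ (pCost W c ρ Q) (wCost W c ρ Q)
        (fun g _ => Finset.le_sup' _ (Finset.mem_univ g))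
      rwa [Finset.card_univ, nsmul_eq_mul] at this
    have := mul_le_mul_of_nonneg_left hsum (inv_nonneg.mpr hcard.le)
    rwa [← mul_assoc, inv_mul_cancel₀ hcard.ne', one_mul] at this
  exact ⟨hPpos, hPsum, hcov, fun g g' => (hpkey g).trans (hpkey g').symm, haP,
    hwP.le.trans hQave_le, fun g => ⟨haP.trans (hpkey g).symm, hwP.trans (hpkey g).symm⟩⟩

end
end

section
/- Let X be a finite set and, for each x ∈ X, let ρ_x be a positive semidefinite d×d complex matrix such that ρ := Σ_x ρ_x has trace 1 (an ensemble). Let |Ψ⟩ ∈ ℂ^d ⊗ ℂ^k be a purification of ρ, i.e., Tr_K[|Ψ⟩⟨Ψ|] = ρ. Then there exists a POVM {P_x}_{x∈X} on ℂ^k (each P_x positive semidefinite, Σ_x P_x = I_k) such that ρ_x = Tr_K[(I_d ⊗ P_x)|Ψ⟩⟨Ψ|] for every x ∈ X. -/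
open Matrix Kronecker ComplexOrder

noncomputable section

/-- Partial trace over the second tensor factor. -/
def ptrace {d k : ℕ} (M : Matrix (Fin d × Fin k) (Fin d × Fin k) ℂ) :
    Matrix (Fin d) (Fin d) ℂ :=
  Matrix.of fun i i' => ∑ j : Fin k, M (i, j) (i', j)

lemma aux_psd_add_eq_zero {n : Type*} [Fintype n] [DecidableEq n]
    {A B : Matrix n n ℂ} (hA : A.PosSemidef) (hB : B.PosSemidef) (h : A + B = 0) :
    A = 0 := by
  have hv : ∀ v, A *ᵥ v = 0 := by
    intro v
    rw [← hA.dotProduct_mulVec_zero_iff]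
    have h1 := hA.dotProduct_mulVec_nonneg v
    have h2 := hB.dotProduct_mulVec_nonneg v
    have hsum : star v ⬝ᵥ A *ᵥ v + star v ⬝ᵥ B *ᵥ v = 0 := by
      rw [← dotProduct_add, ← add_mulVec, h, zero_mulVec, dotProduct_zero]
    have hle : star v ⬝ᵥ A *ᵥ v ≤ 0 := by
      rw [eq_neg_of_add_eq_zero_left hsum]
      exact neg_nonpos.mpr h2
    exact le_antisymm hle h1
  ext i j
  have := congrFun (hv (Pi.single j 1)) i
  simpa [mulVec_single] using this

lemma aux_psd_conj_zero {n m : Type*} [Fintype n] [Fintype m]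
    {M : Matrix n n ℂ} (hM : M.PosSemidef) (B : Matrix n m ℂ)
    (h : Bᴴ * M * B = 0) : M * B = 0 := by
  obtain ⟨C, rfl⟩ : ∃ C : Matrix n n ℂ, M = Cᴴ * C := by
    classical
    open scoped MatrixOrder in
    exact CStarAlgebra.nonneg_iff_eq_star_mul_self.mp hM.nonneg
  have h2 : (C * B)ᴴ * (C * B) = 0 := by
    rw [conjTranspose_mul]
    simp only [Matrix.mul_assoc] at h ⊢
    exact h
  have hCB := conjTranspose_mul_self_eq_zero.mp h2
  rw [Matrix.mul_assoc, hCB, Matrix.mul_zero]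

lemma aux_psd_smul {n : Type*} [Fintype n] {M : Matrix n n ℂ} (hM : M.PosSemidef)
    {c : ℝ} (hc : 0 ≤ c) : ((c : ℂ) • M).PosSemidef := by
  refine Matrix.PosSemidef.of_dotProduct_mulVec_nonneg ?_ ?_
  · rw [Matrix.IsHermitian, Matrix.conjTranspose_smul, hM.1]
    congr 1
    simp [Complex.conj_ofReal]
  · intro x
    rw [Matrix.smul_mulVec, dotProduct_smul, smul_eq_mul]
    have h0 : (0:ℂ) ≤ (c : ℂ) := by exact_mod_cast hc
    exact mul_nonneg h0 (hM.dotProduct_mulVec_nonneg x)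

/-- Schrödinger's steering lemma: every ensemble `{ρ_x}` for a state `ρ = Σ_x ρ_x` is induced
from any purification `|Ψ⟩` of `ρ` by a POVM on the purifying system:
`ρ_x = Tr_K[(I ⊗ P_x)|Ψ⟩⟨Ψ|]`. -/
theorem stmt9 {X : Type} [Fintype X] {d k : ℕ}
    (ρ : X → Matrix (Fin d) (Fin d) ℂ)
    (hρpos : ∀ x, (ρ x).PosSemidef)
    (hρtr : (∑ x, ρ x).trace = 1)
    (Ψ : Fin d × Fin k → ℂ)
    (hΨ : ptrace (Matrix.vecMulVec Ψ (star Ψ)) = ∑ x, ρ x) :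
    ∃ P : X → Matrix (Fin k) (Fin k) ℂ,
      (∀ x, (P x).PosSemidef) ∧ (∑ x, P x = 1) ∧
      ∀ x, ρ x = ptrace (((1 : Matrix (Fin d) (Fin d) ℂ) ⊗ₖ P x)
        * Matrix.vecMulVec Ψ (star Ψ)) := by
  classical
  have hXne : Nonempty X := by
    by_contra hX
    rw [not_nonempty_iff] at hX
    rw [Finset.univ_eq_empty, Finset.sum_empty, Matrix.trace_zero] at hρtr
    exact zero_ne_one hρtr
  set ρt : Matrix (Fin d) (Fin d) ℂ := ∑ x, ρ x with hρt
  have hsumpos : ∀ (s : Finset X), Matrix.PosSemidef (∑ x ∈ s, ρ x) := by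
    intro s
    induction s using Finset.induction with
    | empty => simpa using (Matrix.PosSemidef.zero (n := Fin d) (R := ℂ))
    | insert _ _ h ih => rw [Finset.sum_insert h]; exact (hρpos _).add ih
  have hρtpos : ρt.PosSemidef := hsumpos Finset.univ
  have hH : ρt.IsHermitian := hρtpos.1
  set U : Matrix (Fin d) (Fin d) ℂ :=
    (Matrix.IsHermitian.eigenvectorUnitary hH : Matrix (Fin d) (Fin d) ℂ) with hU
  have hUsU : star U * U = 1 := Unitary.coe_star_mul_self _
  set lam : Fin d → ℝ := hH.eigenvalues with hlam
  have hnn : ∀ i, 0 ≤ lam i := hρtpos.eigenvalues_nonneg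
  set g : Fin d → ℂ := fun i => if lam i = 0 then 0 else ((lam i : ℂ))⁻¹ with hg
  set e : Fin d → ℂ := fun i => if lam i = 0 then 0 else 1 with he
  have key : ∀ a b : Fin d → ℂ,
      (U * Matrix.diagonal a * star U) * (U * Matrix.diagonal b * star U)
        = U * Matrix.diagonal (a * b) * star U := by
    intro a b
    simp only [Matrix.mul_assoc]
    rw [← Matrix.mul_assoc (star U) U, hUsU, Matrix.one_mul,
      ← Matrix.mul_assoc (Matrix.diagonal a) (Matrix.diagonal b),
      Matrix.diagonal_mul_diagonal]
    rfl
  have hspec : ρt = U * Matrix.diagonal (fun i => ((lam i : ℂ))) * star U := by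
    have := hH.spectral_theorem
    rw [Unitary.conjStarAlgAut_apply] at this
    exact this
  set Pinv : Matrix (Fin d) (Fin d) ℂ := U * Matrix.diagonal g * star U with hPinvdef
  set Pi1 : Matrix (Fin d) (Fin d) ℂ := U * Matrix.diagonal e * star U with hPi1def
  have hgl : g * (fun i => ((lam i : ℂ))) = e := by
    funext i
    simp only [Pi.mul_apply, hg, he]
    by_cases h : lam i = 0
    · simp [h]
    · have : ((lam i : ℂ)) ≠ 0 := by exact_mod_cast h
      simp [h, inv_mul_cancel₀ this]
  have hlg : (fun i => ((lam i : ℂ))) * g = e := by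
    rw [mul_comm, hgl]
  have hel : e * (fun i => ((lam i : ℂ))) = (fun i => ((lam i : ℂ))) := by
    funext i
    simp only [Pi.mul_apply, he]
    by_cases h : lam i = 0 <;> simp [h]
  have hge : g * e = g := by
    funext i
    simp only [Pi.mul_apply, hg, he]
    by_cases h : lam i = 0 <;> simp [h]
  -- sandwich identities
  have hρP : ρt * Pinv = Pi1 := by rw [hspec, hPinvdef, key, hlg]
  have hPρ : Pinv * ρt = Pi1 := by rw [hspec, hPinvdef, key, hgl]
  have hPone_ρ : Pi1 * ρt = ρt := by rw [hspec, hPi1def, key, hel, ← hspec]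
  have hPρP : Pinv * ρt * Pinv = Pinv := by
    rw [hPρ, hPi1def, hPinvdef, key, mul_comm e g, hge]
  have star_real_vec : ∀ (v : Fin d → ℂ), (∀ i, (starRingEnd ℂ) (v i) = v i) →
      star v = v := fun v h => funext fun i => h i
  have hgstar : star g = g := by
    apply star_real_vec
    intro i
    simp only [hg]
    by_cases h : lam i = 0 <;> simp [h, Complex.conj_ofReal, map_inv₀]
  have hestar : star e = e := by
    apply star_real_vec
    intro i
    simp only [he]
    by_cases h : lam i = 0 <;> simp [h]
  have hPinvH : Pinvᴴ = Pinv := by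
    rw [hPinvdef]
    simp only [Matrix.conjTranspose_mul, Matrix.conjTranspose_conjTranspose,
      Matrix.star_eq_conjTranspose, Matrix.diagonal_conjTranspose, hgstar]
    rw [Matrix.mul_assoc]
  have hPi1H : Pi1ᴴ = Pi1 := by
    rw [hPi1def]
    simp only [Matrix.conjTranspose_mul, Matrix.conjTranspose_conjTranspose,
      Matrix.star_eq_conjTranspose, Matrix.diagonal_conjTranspose, hestar]
    rw [Matrix.mul_assoc]
  -- the purification matrix
  set A : Matrix (Fin d) (Fin k) ℂ := Matrix.of (fun i j => Ψ (i, j)) with hAdef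
  have hAA : A * Aᴴ = ρt := by
    rw [← hΨ]
    ext i i'
    simp [ptrace, Matrix.mul_apply, Matrix.vecMulVec_apply, Matrix.conjTranspose_apply, hAdef]
  -- key projection property:  ρ x * Pi1 = ρ x  and  Pi1 * ρ x = ρ x
  have hproj : ∀ x : X, ρ x * Pi1 = ρ x ∧ Pi1 * ρ x = ρ x := by
    intro x
    set B : Matrix (Fin d) (Fin d) ℂ := 1 - Pi1 with hBdef
    have hBH : Bᴴ = B := by
      rw [hBdef, Matrix.conjTranspose_sub, Matrix.conjTranspose_one, hPi1H]
    have hBρt : B * ρt = 0 := by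
      rw [hBdef, Matrix.sub_mul, Matrix.one_mul, hPone_ρ, sub_self]
    have hNpos : Matrix.PosSemidef (ρt - ρ x) := by
      have : ρt - ρ x = ∑ y ∈ Finset.univ.erase x, ρ y := by
        rw [hρt, sub_eq_iff_eq_add]
        exact (Finset.sum_erase_add Finset.univ ρ (Finset.mem_univ x)).symm
      rw [this]
      exact hsumpos _
    have hX1 : B * ρ x * Bᴴ = 0 := by
      have hadd : B * ρ x * Bᴴ + B * (ρt - ρ x) * Bᴴ = 0 := by
        have : B * ρ x * Bᴴ + B * (ρt - ρ x) * Bᴴ = B * ρt * Bᴴ := by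
          rw [← Matrix.add_mul, ← Matrix.mul_add]
          congr 2
          abel
        rw [this, hBρt, Matrix.zero_mul]
      exact aux_psd_add_eq_zero ((hρpos x).mul_mul_conjTranspose_same B)
        (hNpos.mul_mul_conjTranspose_same B) hadd
    have hρxB : ρ x * B = 0 := by
      apply aux_psd_conj_zero (hρpos x)
      rw [hBH]
      rw [hBH] at hX1
      exact hX1
    have h1 : ρ x * Pi1 = ρ x := by
      have := hρxB
      rw [hBdef, Matrix.mul_sub, Matrix.mul_one, sub_eq_zero] at this
      exact this.symm
    refine ⟨h1, ?_⟩
    have : (ρ x * Pi1)ᴴ = Pi1 * ρ x := by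
      rw [Matrix.conjTranspose_mul, hPi1H, (hρpos x).1]
    rw [h1, (hρpos x).1] at this
    exact this.symm
  -- extra diagonal identities
  have hPonePinv : Pi1 * Pinv = Pinv := by
    rw [hPi1def, hPinvdef, key, mul_comm e g, hge]
  have hρPone : ρt * Pi1 = ρt := by
    rw [hspec, hPi1def, key, mul_comm _ e, hel, ← hspec]
  have hA1 : A * (Aᴴ * Pinv) = Pi1 := by rw [← Matrix.mul_assoc, hAA, hρP]
  have hA2 : Pinv * (A * Aᴴ) = Pi1 := by rw [hAA, hPρ]
  set Qp : Matrix (Fin k) (Fin k) ℂ := Aᴴ * Pinv * A with hQpdef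
  have hQpH : Qpᴴ = Qp := by
    rw [hQpdef]
    simp only [Matrix.conjTranspose_mul, Matrix.conjTranspose_conjTranspose, hPinvH,
      Matrix.mul_assoc]
  have hQp2 : Qp * Qp = Qp := by
    rw [hQpdef]
    calc Aᴴ * Pinv * A * (Aᴴ * Pinv * A)
        = Aᴴ * (Pinv * (A * Aᴴ)) * (Pinv * A) := by simp only [Matrix.mul_assoc]
      _ = Aᴴ * Pi1 * (Pinv * A) := by rw [hA2]
      _ = Aᴴ * (Pi1 * Pinv) * A := by simp only [Matrix.mul_assoc]
      _ = Aᴴ * Pinv * A := by rw [hPonePinv]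
  have hAQpA : A * Qp * Aᴴ = ρt := by
    rw [hQpdef]
    calc A * (Aᴴ * Pinv * A) * Aᴴ
        = A * (Aᴴ * (Pinv * (A * Aᴴ))) := by simp only [Matrix.mul_assoc]
      _ = A * (Aᴴ * Pi1) := by rw [hA2]
      _ = A * Aᴴ * Pi1 := by rw [Matrix.mul_assoc]
      _ = ρt := by rw [hAA, hρPone]
  have h1mQp : (1 - Qp).PosSemidef := by
    have h := Matrix.posSemidef_conjTranspose_mul_self (1 - Qp)
    have heq : (1 - Qp)ᴴ * (1 - Qp) = 1 - Qp := by
      rw [Matrix.conjTranspose_sub, Matrix.conjTranspose_one, hQpH, Matrix.sub_mul,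
        Matrix.one_mul, Matrix.mul_sub, Matrix.mul_one, hQp2, sub_self, sub_zero]
    rwa [heq] at h
  -- the POVM
  set c : ℝ := ((Fintype.card X : ℝ))⁻¹ with hcdef
  have hc : 0 ≤ c := by positivity
  set Q : X → Matrix (Fin k) (Fin k) ℂ :=
    fun x => (Pinv * A)ᴴ * ρ x * (Pinv * A) + (c : ℂ) • (1 - Qp) with hQdef
  have hQpos : ∀ x, (Q x).PosSemidef := fun x =>
    ((hρpos x).conjTranspose_mul_mul_same (Pinv * A)).add (aux_psd_smul h1mQp hc)
  have hcard : ((Fintype.card X : ℂ)) * (c : ℂ) = 1 := by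
    rw [hcdef]
    push_cast
    rw [mul_inv_cancel₀]
    exact_mod_cast Fintype.card_ne_zero
  have hQsum : ∑ x, Q x = 1 := by
    rw [hQdef]
    rw [Finset.sum_add_distrib]
    have h1 : ∑ x, (Pinv * A)ᴴ * ρ x * (Pinv * A) = Qp := by
      rw [← Matrix.sum_mul, ← Matrix.mul_sum, ← hρt]
      calc (Pinv * A)ᴴ * ρt * (Pinv * A)
          = Aᴴ * (Pinv * ρt * Pinv) * A := by
            rw [Matrix.conjTranspose_mul, hPinvH]
            simp only [Matrix.mul_assoc]
        _ = Qp := by rw [hPρP, hQpdef]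
    have h2 : ∑ _x : X, (c : ℂ) • (1 - Qp) = 1 - Qp := by
      rw [Finset.sum_const, ← Nat.cast_smul_eq_nsmul ℂ, smul_smul]
      simp only [Finset.card_univ]
      rw [hcard, one_smul]
    rw [h1, h2]
    abel
  -- ptrace computation
  have hptr : ∀ R : Matrix (Fin k) (Fin k) ℂ,
      ptrace (((1 : Matrix (Fin d) (Fin d) ℂ) ⊗ₖ R) * Matrix.vecMulVec Ψ (star Ψ))
        = A * Rᵀ * Aᴴ := by
    intro R
    ext i i'
    simp only [ptrace, Matrix.of_apply, Matrix.mul_apply, Matrix.kroneckerMap_apply,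
      Matrix.vecMulVec_apply, Matrix.one_apply, Matrix.conjTranspose_apply,
      Matrix.transpose_apply, Fintype.sum_prod_type, hAdef, Pi.star_apply, RCLike.star_def,
      ite_mul, one_mul, zero_mul]
    refine Finset.sum_congr rfl fun j _ => ?_
    rw [Finset.sum_comm]
    simp only [Finset.sum_ite_eq, Finset.mem_univ, if_true]
    rw [Finset.sum_mul]
    refine Finset.sum_congr rfl fun b _ => ?_
    ring
  refine ⟨fun x => (Q x)ᵀ, fun x => (hQpos x).transpose, ?_, ?_⟩
  · rw [← Matrix.transpose_sum, hQsum, Matrix.transpose_one]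
  · intro x
    rw [hptr, Matrix.transpose_transpose, hQdef]
    rw [Matrix.mul_add, Matrix.add_mul]
    have hT1 : A * ((Pinv * A)ᴴ * ρ x * (Pinv * A)) * Aᴴ = ρ x := by
      rw [Matrix.conjTranspose_mul, hPinvH]
      calc A * (Aᴴ * Pinv * ρ x * (Pinv * A)) * Aᴴ
          = A * (Aᴴ * (Pinv * (ρ x * (Pinv * (A * Aᴴ))))) := by simp only [Matrix.mul_assoc]
        _ = A * (Aᴴ * (Pinv * (ρ x * Pi1))) := by rw [hA2]
        _ = A * (Aᴴ * (Pinv * ρ x)) := by rw [(hproj x).1]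
        _ = A * Aᴴ * Pinv * ρ x := by simp only [Matrix.mul_assoc]
        _ = ρ x := by rw [hAA, hρP, (hproj x).2]
    have hT2 : A * ((c : ℂ) • (1 - Qp)) * Aᴴ = 0 := by
      rw [Matrix.mul_smul, Matrix.smul_mul]
      rw [Matrix.mul_sub, Matrix.mul_one, Matrix.sub_mul, hAA, hAQpA, sub_self, smul_zero]
    rw [hT1, hT2, add_zero]

end
end

section
/- Let G be a finite group, U : G → U(d) a unitary representation on H = ℂ^d, and c : G×G → ℝ a right-invariant cost function (c(ĝh,gh) = c(ĝ,g) for all ĝ,g,h ∈ G). Let K = ℂ^k, let σ be a state on H⊗K, and let Q be a POVM on H⊗K, with G acting by g ↦ U(g)⊗I_K. Then there exist a finite-dimensional space L = ℂ^l, a unit vector |Ψ⟩ ∈ H⊗L whose partial trace ρ := Tr_L[|Ψ⟩⟨Ψ|] is U-invariant (U(g)ρU(g)† = ρ for all g), and a POVM P on H⊗L (with G acting by U(g)⊗I_L) such that: the pointwise cost c(Ψ,P|g) is independent of g; c_ave(Ψ,P) = c_ave(σ,Q); and c_wc(Ψ,P) ≤ c_wc(σ,Q). -/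
open Matrix Kronecker ComplexOrder

noncomputable section
set_option linter.unusedSectionVars false
set_option maxHeartbeats 1000000




section Helpers
variable {G : Type} [Group G] [Fintype G] [DecidableEq G] {d k : ℕ}

def WkM (U : G →* Matrix.unitaryGroup (Fin d) ℂ) (k : ℕ) (x : G) :
    Matrix (Fin d × Fin k) (Fin d × Fin k) ℂ :=
  (U x : Matrix (Fin d) (Fin d) ℂ) ⊗ₖ (1 : Matrix (Fin k) (Fin k) ℂ)

variable (U : G →* Matrix.unitaryGroup (Fin d) ℂ)

lemma WkM_mul (x y : G) : WkM U k x * WkM U k y = WkM U k (x * y) := by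
  rw [WkM, WkM, WkM, _root_.map_mul, Matrix.UnitaryGroup.mul_val,
    ← Matrix.mul_kronecker_mul, mul_one]

lemma WkM_one : WkM U k 1 = 1 := by
  rw [WkM, _root_.map_one, Matrix.UnitaryGroup.one_val, Matrix.one_kronecker_one]

lemma unitary_coe_inv (x : G) :
    ((U x : Matrix (Fin d) (Fin d) ℂ))ᴴ = (U x⁻¹ : Matrix (Fin d) (Fin d) ℂ) := by
  rw [map_inv, Matrix.UnitaryGroup.inv_val]
  rfl

lemma WkM_conjTranspose (x : G) : (WkM U k x)ᴴ = WkM U k x⁻¹ := by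
  ext ⟨i, j⟩ ⟨i', j'⟩
  have h1 : ((U x : Matrix (Fin d) (Fin d) ℂ))ᴴ i i' = (U x⁻¹ : Matrix (Fin d) (Fin d) ℂ) i i' := by
    rw [unitary_coe_inv]
  simp only [Matrix.conjTranspose_apply] at h1
  simp only [WkM, Matrix.conjTranspose_apply, Matrix.kroneckerMap_apply, star_mul', h1]
  simp [Matrix.one_apply, eq_comm, apply_ite (starRingEnd ℂ)]

lemma trace_conj_WkM (x : G) (M : Matrix (Fin d × Fin k) (Fin d × Fin k) ℂ) :
    (WkM U k x * M * (WkM U k x)ᴴ).trace = M.trace := by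
  rw [WkM_conjTranspose, Matrix.trace_mul_cycle, WkM_mul, inv_mul_cancel, WkM_one, one_mul]

lemma conj_sigma_eq (A σ : Matrix (Fin d × Fin k) (Fin d × Fin k) ℂ)
    (hA : Aᴴ = A) (hAA : A * A = σ) (x : G) :
    (WkM U k x * A) * (WkM U k x * A)ᴴ = WkM U k x * σ * (WkM U k x)ᴴ := by
  rw [Matrix.conjTranspose_mul, hA, Matrix.mul_assoc, ← Matrix.mul_assoc A A, hAA,
    ← Matrix.mul_assoc, Matrix.mul_assoc]

end Helpers

section SumHelpers

lemma trace_submatrix_equiv' {n p : Type} [Fintype n] [Fintype p] (e : p ≃ n)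
    (M : Matrix n n ℂ) : (M.submatrix e e).trace = M.trace := by
  simp only [Matrix.trace, Matrix.diag, Matrix.submatrix_apply]
  exact Equiv.sum_comp e (fun i => M i i)

lemma conj_vecMulVec {n : Type} [Fintype n] (W : Matrix n n ℂ) (ψ : n → ℂ) :
    W * Matrix.vecMulVec ψ (star ψ) * Wᴴ
      = Matrix.vecMulVec (W *ᵥ ψ) (star (W *ᵥ ψ)) := by
  ext x y
  simp only [Matrix.mul_apply, Matrix.vecMulVec_apply, Matrix.mulVec, dotProduct,
    Matrix.conjTranspose_apply, Pi.star_apply, star_sum, star_mul', Finset.sum_mul,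
    Finset.mul_sum]
  refine Finset.sum_congr rfl fun u _ => Finset.sum_congr rfl fun v _ => by ring

lemma trace_mul_vecMulVec {n : Type} [Fintype n] (R : Matrix n n ℂ) (v : n → ℂ) :
    (R * Matrix.vecMulVec v (star v)).trace = ∑ x, ∑ y, star (v x) * R x y * v y := by
  simp only [Matrix.trace, Matrix.diag, Matrix.mul_apply, Matrix.vecMulVec_apply, Pi.star_apply]
  refine Finset.sum_congr rfl fun x _ => Finset.sum_congr rfl fun y _ => by ring

lemma trace_mul_CCH {n : Type} [Fintype n] (Qm C : Matrix n n ℂ) :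
    (Qm * (C * Cᴴ)).trace
      = ∑ w : (n × n) × n, star (C w.1.1 w.2) * Qm w.1.1 w.1.2 * C w.1.2 w.2 := by
  rw [Fintype.sum_prod_type, Fintype.sum_prod_type]
  simp only [Matrix.trace, Matrix.diag, Matrix.mul_apply, Matrix.conjTranspose_apply,
    Finset.mul_sum]
  refine Finset.sum_congr rfl fun x₁ _ => Finset.sum_congr rfl fun x₂ _ =>
    Finset.sum_congr rfl fun y _ => by ring

end SumHelpers

section Main
variable {G : Type} [Group G] [Fintype G] [DecidableEq G] {d k : ℕ}

def ccR (G : Type) [Fintype G] : ℝ := (Real.sqrt (Fintype.card G))⁻¹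

lemma ccG (G : Type) [Group G] [Fintype G] :
    star ((ccR G : ℝ) : ℂ) * ((ccR G : ℝ) : ℂ) = ((Fintype.card G : ℂ))⁻¹ := by
  rw [Complex.star_def, Complex.conj_ofReal, ← Complex.ofReal_mul]
  rw [show (ccR G) * ccR G = ((Fintype.card G : ℝ))⁻¹ by
    rw [ccR, ← mul_inv, Real.mul_self_sqrt (by positivity)]]
  push_cast
  ring

def Psi0 (U : G →* Matrix.unitaryGroup (Fin d) ℂ)
    (A : Matrix (Fin d × Fin k) (Fin d × Fin k) ℂ) :
    Fin d × (Fin k × ((Fin d × Fin k) × G)) → ℂ :=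
  fun x => ((ccR G : ℝ) : ℂ) * ((WkM U k x.2.2.2⁻¹ * A) (x.1, x.2.1) x.2.2.1)

def P0 (Q : G → Matrix (Fin d × Fin k) (Fin d × Fin k) ℂ) (gh : G) :
    Matrix (Fin d × (Fin k × ((Fin d × Fin k) × G)))
      (Fin d × (Fin k × ((Fin d × Fin k) × G))) ℂ :=
  Matrix.of fun x x' =>
    if x.2.2 = x'.2.2 then Q (gh * x.2.2.2⁻¹) (x.1, x.2.1) (x'.1, x'.2.1) else 0

variable (U : G →* Matrix.unitaryGroup (Fin d) ℂ)
  (A : Matrix (Fin d × Fin k) (Fin d × Fin k) ℂ)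

lemma kron_one_mul_apply (N : Matrix (Fin d) (Fin d) ℂ)
    (M : Matrix (Fin d × Fin k) (Fin d × Fin k) ℂ) (i : Fin d) (j : Fin k)
    (y : Fin d × Fin k) :
    ((N ⊗ₖ (1 : Matrix (Fin k) (Fin k) ℂ)) * M) (i, j) y = ∑ i', N i i' * M (i', j) y := by
  rw [Matrix.mul_apply, Fintype.sum_prod_type]
  simp only [Matrix.kroneckerMap_apply, Matrix.one_apply, mul_ite, mul_one, mul_zero,
    ite_mul, zero_mul]
  simp [Finset.sum_ite_eq]

lemma kron_mulVec_Psi0 (g : G) :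
    (((U g : Matrix (Fin d) (Fin d) ℂ)
        ⊗ₖ (1 : Matrix (Fin k × ((Fin d × Fin k) × G)) (Fin k × ((Fin d × Fin k) × G)) ℂ))
      *ᵥ Psi0 U A)
    = fun x => ((ccR G : ℝ) : ℂ) * ((WkM U k (g * x.2.2.2⁻¹) * A) (x.1, x.2.1) x.2.2.1) := by
  funext x
  show ∑ y, _ * Psi0 U A y = _
  rw [Fintype.sum_prod_type]
  simp only [Matrix.kroneckerMap_apply, Matrix.one_apply, mul_ite, mul_one, mul_zero,
    ite_mul, zero_mul, Finset.sum_ite_eq, Finset.mem_univ, if_true]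
  rw [show WkM U k (g * x.2.2.2⁻¹) * A = WkM U k g * (WkM U k x.2.2.2⁻¹ * A) by
    rw [← Matrix.mul_assoc, WkM_mul]]
  rw [show WkM U k g = (U g : Matrix (Fin d) (Fin d) ℂ) ⊗ₖ (1 : Matrix (Fin k) (Fin k) ℂ)
    from rfl]
  rw [kron_one_mul_apply, Finset.mul_sum]
  refine Finset.sum_congr rfl fun i' _ => ?_
  simp only [Psi0]
  ring
end Main

section Key
variable {G : Type} [Group G] [Fintype G] [DecidableEq G] {d k : ℕ}
variable (U : G →* Matrix.unitaryGroup (Fin d) ℂ)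
  (A : Matrix (Fin d × Fin k) (Fin d × Fin k) ℂ)

def eqvA (G : Type) (d k : ℕ) :
    ((Fin d × Fin k) × ((Fin d × Fin k) × G))
      ≃ (Fin d × (Fin k × ((Fin d × Fin k) × G))) where
  toFun q := (q.1.1, (q.1.2, q.2))
  invFun y := ((y.1, y.2.1), y.2.2)
  left_inv q := rfl
  right_inv y := rfl

def chiE (G : Type) (d k : ℕ) :
    (G × (((Fin d × Fin k) × (Fin d × Fin k)) × (Fin d × Fin k)))
      ≃ ((Fin d × (Fin k × ((Fin d × Fin k) × G))) × (Fin d × Fin k)) where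
  toFun r := ((r.2.1.1.1, (r.2.1.1.2, (r.2.2, r.1))), r.2.1.2)
  invFun p := (p.1.2.2.2, (((p.1.1, p.1.2.1), p.2), p.1.2.2.1))
  left_inv r := rfl
  right_inv p := rfl

lemma sum_P0_collapse (Q : G → Matrix (Fin d × Fin k) (Fin d × Fin k) ℂ) (gh : G)
    (v : Fin d × (Fin k × ((Fin d × Fin k) × G)) → ℂ)
    (x : Fin d × (Fin k × ((Fin d × Fin k) × G))) :
    (∑ y, star (v x) * P0 Q gh x y * v y)
      = ∑ x₂ : Fin d × Fin k,
          star (v x) * Q (gh * x.2.2.2⁻¹) (x.1, x.2.1) x₂ * v (x₂.1, (x₂.2, x.2.2)) := by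
  rw [← Fintype.sum_equiv (eqvA G d k)
    (fun q => star (v x) * P0 Q gh x ((eqvA G d k) q) * v ((eqvA G d k) q))
    (fun y => star (v x) * P0 Q gh x y * v y) (fun q => rfl)]
  rw [Fintype.sum_prod_type]
  refine Finset.sum_congr rfl fun x₂ _ => ?_
  simp only [eqvA, Equiv.coe_fn_mk, P0, Matrix.of_apply, mul_ite, mul_zero, ite_mul, zero_mul,
    Finset.sum_ite_eq, Finset.mem_univ, if_true, Prod.mk.eta]

lemma key_trace (σ : Matrix (Fin d × Fin k) (Fin d × Fin k) ℂ)
    (hA : Aᴴ = A) (hAA : A * A = σ)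
    (Q : G → Matrix (Fin d × Fin k) (Fin d × Fin k) ℂ) (gh g : G) :
    (P0 Q gh * (((U g : Matrix (Fin d) (Fin d) ℂ)
        ⊗ₖ (1 : Matrix (Fin k × ((Fin d × Fin k) × G)) (Fin k × ((Fin d × Fin k) × G)) ℂ))
        * Matrix.vecMulVec (Psi0 U A) (star (Psi0 U A))
        * ((U g : Matrix (Fin d) (Fin d) ℂ)
        ⊗ₖ (1 : Matrix (Fin k × ((Fin d × Fin k) × G)) (Fin k × ((Fin d × Fin k) × G)) ℂ))ᴴ)).trace
    = (Fintype.card G : ℂ)⁻¹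
        * ∑ h : G, (Q (gh * h⁻¹)
            * (WkM U k (g * h⁻¹) * σ * (WkM U k (g * h⁻¹))ᴴ)).trace := by
  rw [conj_vecMulVec, trace_mul_vecMulVec]
  set vv := ((U g : Matrix (Fin d) (Fin d) ℂ)
        ⊗ₖ (1 : Matrix (Fin k × ((Fin d × Fin k) × G)) (Fin k × ((Fin d × Fin k) × G)) ℂ))
      *ᵥ Psi0 U A with hvv
  calc (∑ x, ∑ y, star (vv x) * P0 Q gh x y * vv y)
      = ∑ x, ∑ x₂ : Fin d × Fin k,
          star (vv x) * Q (gh * x.2.2.2⁻¹) (x.1, x.2.1) x₂ * vv (x₂.1, (x₂.2, x.2.2)) :=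
        Finset.sum_congr rfl fun x _ => sum_P0_collapse Q gh vv x
    _ = ∑ p : (Fin d × (Fin k × ((Fin d × Fin k) × G))) × (Fin d × Fin k),
          star (vv p.1) * Q (gh * p.1.2.2.2⁻¹) (p.1.1, p.1.2.1) p.2
            * vv (p.2.1, (p.2.2, p.1.2.2)) :=
        (Fintype.sum_prod_type (f := fun p : (Fin d × (Fin k × ((Fin d × Fin k) × G))) × (Fin d × Fin k) =>
          star (vv p.1) * Q (gh * p.1.2.2.2⁻¹) (p.1.1, p.1.2.1) p.2
            * vv (p.2.1, (p.2.2, p.1.2.2)))).symm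
    _ = ∑ r : G × (((Fin d × Fin k) × (Fin d × Fin k)) × (Fin d × Fin k)),
          (Fintype.card G : ℂ)⁻¹
            * (star ((WkM U k (g * r.1⁻¹) * A) r.2.1.1 r.2.2)
              * Q (gh * r.1⁻¹) r.2.1.1 r.2.1.2
              * ((WkM U k (g * r.1⁻¹) * A) r.2.1.2 r.2.2)) := by
        refine (Fintype.sum_equiv (chiE G d k) _ _ fun r => ?_).symm
        obtain ⟨h, ⟨⟨x₁, x₂⟩, y⟩⟩ := r
        simp only [chiE, Equiv.coe_fn_mk, hvv, kron_mulVec_Psi0 U A g, Prod.mk.eta]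
        rw [← ccG G]
        simp only [star_mul']
        ring
    _ = ∑ h : G, ∑ w : ((Fin d × Fin k) × (Fin d × Fin k)) × (Fin d × Fin k),
          (Fintype.card G : ℂ)⁻¹
            * (star ((WkM U k (g * h⁻¹) * A) w.1.1 w.2)
              * Q (gh * h⁻¹) w.1.1 w.1.2
              * ((WkM U k (g * h⁻¹) * A) w.1.2 w.2)) :=
        Fintype.sum_prod_type (f := fun r : G × (((Fin d × Fin k) × (Fin d × Fin k)) × (Fin d × Fin k)) =>
          (Fintype.card G : ℂ)⁻¹
            * (star ((WkM U k (g * r.1⁻¹) * A) r.2.1.1 r.2.2)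
              * Q (gh * r.1⁻¹) r.2.1.1 r.2.1.2
              * ((WkM U k (g * r.1⁻¹) * A) r.2.1.2 r.2.2)))
    _ = (Fintype.card G : ℂ)⁻¹ * ∑ h : G,
          (Q (gh * h⁻¹) * ((WkM U k (g * h⁻¹) * A) * (WkM U k (g * h⁻¹) * A)ᴴ)).trace := by
        rw [Finset.mul_sum]
        refine Finset.sum_congr rfl fun h _ => ?_
        rw [trace_mul_CCH, Finset.mul_sum]
    _ = (Fintype.card G : ℂ)⁻¹
        * ∑ h : G, (Q (gh * h⁻¹)
            * (WkM U k (g * h⁻¹) * σ * (WkM U k (g * h⁻¹))ᴴ)).trace := by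
        simp only [conj_sigma_eq U A σ hA hAA]

end Key

section Rest
variable {G : Type} [Group G] [Fintype G] [DecidableEq G] {d k : ℕ}
variable (U : G →* Matrix.unitaryGroup (Fin d) ℂ)
  (A : Matrix (Fin d × Fin k) (Fin d × Fin k) ℂ)

lemma P0_posSemidef (Q : G → Matrix (Fin d × Fin k) (Fin d × Fin k) ℂ)
    (hQpos : ∀ gh, (Q gh).PosSemidef) (gh : G) : (P0 Q gh).PosSemidef := by
  refine Matrix.PosSemidef.of_dotProduct_mulVec_nonneg ?_ ?_
  · ext x y
    simp only [P0, Matrix.conjTranspose_apply, Matrix.of_apply]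
    by_cases hxy : x.2.2 = y.2.2
    · have h2 : y.2.2.2 = x.2.2.2 := by rw [hxy]
      rw [if_pos hxy.symm, if_pos hxy, h2]
      have hH := (hQpos (gh * x.2.2.2⁻¹)).1
      calc star (Q (gh * x.2.2.2⁻¹) (y.1, y.2.1) (x.1, x.2.1))
          = (Q (gh * x.2.2.2⁻¹))ᴴ (x.1, x.2.1) (y.1, y.2.1) := rfl
        _ = Q (gh * x.2.2.2⁻¹) (x.1, x.2.1) (y.1, y.2.1) := by rw [hH]
    · rw [if_neg (fun h => hxy h.symm), if_neg hxy, star_zero]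
  · intro x
    have hform : star x ⬝ᵥ (P0 Q gh *ᵥ x)
        = ∑ b : (Fin d × Fin k) × G,
            star (fun z : Fin d × Fin k => x (z.1, (z.2, b))) ⬝ᵥ
              (Q (gh * b.2⁻¹) *ᵥ fun z : Fin d × Fin k => x (z.1, (z.2, b))) := by
      calc star x ⬝ᵥ (P0 Q gh *ᵥ x)
          = ∑ x₁, ∑ y, star (x x₁) * P0 Q gh x₁ y * x y := by
            simp only [dotProduct, Matrix.mulVec, Pi.star_apply, Finset.mul_sum]
            exact Finset.sum_congr rfl fun x₁ _ => Finset.sum_congr rfl fun y _ => by ring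
        _ = ∑ x₁, ∑ x₂ : Fin d × Fin k,
              star (x x₁) * Q (gh * x₁.2.2.2⁻¹) (x₁.1, x₁.2.1) x₂
                * x (x₂.1, (x₂.2, x₁.2.2)) :=
            Finset.sum_congr rfl fun x₁ _ => sum_P0_collapse Q gh x x₁
        _ = ∑ p : (Fin d × (Fin k × ((Fin d × Fin k) × G))) × (Fin d × Fin k),
              star (x p.1) * Q (gh * p.1.2.2.2⁻¹) (p.1.1, p.1.2.1) p.2
                * x (p.2.1, (p.2.2, p.1.2.2)) :=
            (Fintype.sum_prod_type (f := fun p :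
                (Fin d × (Fin k × ((Fin d × Fin k) × G))) × (Fin d × Fin k) =>
              star (x p.1) * Q (gh * p.1.2.2.2⁻¹) (p.1.1, p.1.2.1) p.2
                * x (p.2.1, (p.2.2, p.1.2.2)))).symm
        _ = ∑ r : ((Fin d × Fin k) × G) × ((Fin d × Fin k) × (Fin d × Fin k)),
              star (x (r.2.1.1, (r.2.1.2, r.1))) * Q (gh * r.1.2⁻¹) r.2.1 r.2.2
                * x (r.2.2.1, (r.2.2.2, r.1)) :=
            (Fintype.sum_equiv
              ⟨fun r => ((r.2.1.1, (r.2.1.2, r.1)), r.2.2),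
               fun p => (p.1.2.2, ((p.1.1, p.1.2.1), p.2)),
               fun r => rfl, fun p => rfl⟩ _ _ fun r => rfl).symm
        _ = ∑ b : (Fin d × Fin k) × G, ∑ z : (Fin d × Fin k) × (Fin d × Fin k),
              star (x (z.1.1, (z.1.2, b))) * Q (gh * b.2⁻¹) z.1 z.2
                * x (z.2.1, (z.2.2, b)) :=
            Fintype.sum_prod_type (f := fun r :
                ((Fin d × Fin k) × G) × ((Fin d × Fin k) × (Fin d × Fin k)) =>
              star (x (r.2.1.1, (r.2.1.2, r.1))) * Q (gh * r.1.2⁻¹) r.2.1 r.2.2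
                * x (r.2.2.1, (r.2.2.2, r.1)))
        _ = _ := by
            refine Finset.sum_congr rfl fun b _ => ?_
            rw [Fintype.sum_prod_type (f := fun z :
                (Fin d × Fin k) × (Fin d × Fin k) =>
              star (x (z.1.1, (z.1.2, b))) * Q (gh * b.2⁻¹) z.1 z.2
                * x (z.2.1, (z.2.2, b)))]
            simp only [dotProduct, Matrix.mulVec, Pi.star_apply, Finset.mul_sum]
            exact Finset.sum_congr rfl fun z₁ _ => Finset.sum_congr rfl fun z₂ _ => by ring
    rw [hform]
    exact Finset.sum_nonneg fun b _ => (hQpos (gh * b.2⁻¹)).dotProduct_mulVec_nonneg _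

lemma P0_sum (Q : G → Matrix (Fin d × Fin k) (Fin d × Fin k) ℂ)
    (hQsum : ∑ gh, Q gh = 1) : ∑ gh, P0 Q gh = 1 := by
  ext x y
  rw [Matrix.sum_apply]
  simp only [P0, Matrix.of_apply]
  by_cases hxy : x.2.2 = y.2.2
  · rw [Finset.sum_congr rfl (fun gh _ => if_pos hxy)]
    have h1 : ∑ gh : G, Q (gh * x.2.2.2⁻¹) (x.1, x.2.1) (y.1, y.2.1)
        = ∑ a : G, Q a (x.1, x.2.1) (y.1, y.2.1) :=
      Fintype.sum_equiv (Equiv.mulRight x.2.2.2⁻¹)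
        (fun gh => Q (gh * x.2.2.2⁻¹) (x.1, x.2.1) (y.1, y.2.1))
        (fun a => Q a (x.1, x.2.1) (y.1, y.2.1)) (fun gh => rfl)
    rw [h1, ← Matrix.sum_apply, hQsum]
    obtain ⟨x1, x21, x22⟩ := x
    obtain ⟨y1, y21, y22⟩ := y
    have hxy' : x22 = y22 := hxy
    subst hxy'
    simp [Matrix.one_apply, Prod.ext_iff]
  · rw [Finset.sum_congr rfl (fun gh _ => if_neg hxy), Finset.sum_const, smul_zero,
      Matrix.one_apply_ne (fun h => hxy (by rw [h]))]

lemma ptrace_conj (g : G) (M : Matrix (Fin d × Fin k) (Fin d × Fin k) ℂ) :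
    (U g : Matrix (Fin d) (Fin d) ℂ) * ptrace M * ((U g : Matrix (Fin d) (Fin d) ℂ))ᴴ
      = ptrace (WkM U k g * M * (WkM U k g)ᴴ) := by
  ext i i'
  have lhs_eq : ((U g : Matrix (Fin d) (Fin d) ℂ) * ptrace M
      * ((U g : Matrix (Fin d) (Fin d) ℂ))ᴴ) i i'
      = ∑ q : Fin d, ∑ p : Fin d, ∑ j : Fin k,
          (U g : Matrix (Fin d) (Fin d) ℂ) i p * M (p, j) (q, j)
            * star ((U g : Matrix (Fin d) (Fin d) ℂ) i' q) := by
    simp only [Matrix.mul_apply, Matrix.conjTranspose_apply, ptrace, Matrix.of_apply,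
      Finset.sum_mul, Finset.mul_sum]
    try exact Finset.sum_congr rfl fun q _ => Finset.sum_congr rfl fun p _ =>
      Finset.sum_congr rfl fun j _ => by ring
  have rhs_eq : ptrace (WkM U k g * M * (WkM U k g)ᴴ) i i'
      = ∑ j : Fin k, ∑ q : Fin d, ∑ p : Fin d,
          (U g : Matrix (Fin d) (Fin d) ℂ) i p * M (p, j) (q, j)
            * star ((U g : Matrix (Fin d) (Fin d) ℂ) i' q) := by
    simp only [ptrace, Matrix.of_apply]
    refine Finset.sum_congr rfl fun j _ => ?_
    rw [Matrix.mul_apply, Fintype.sum_prod_type]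
    have hct : ∀ (q : Fin d) (j₂ : Fin k), ((WkM U k g)ᴴ) (q, j₂) (i', j)
        = star ((U g : Matrix (Fin d) (Fin d) ℂ) i' q) * (if j = j₂ then 1 else 0) := by
      intro q j₂
      simp only [Matrix.conjTranspose_apply, WkM, Matrix.kroneckerMap_apply,
        Matrix.one_apply, star_mul']
      rw [apply_ite (star : ℂ → ℂ), star_one, star_zero]
    simp only [hct, mul_ite, mul_one, mul_zero, ← mul_assoc]
    simp only [Finset.sum_ite_eq, Finset.mem_univ, if_true]
    refine Finset.sum_congr rfl fun q _ => ?_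
    have hk : (WkM U k g * M) (i, j) (q, j)
        = ∑ p, (U g : Matrix (Fin d) (Fin d) ℂ) i p * M (p, j) (q, j) :=
      kron_one_mul_apply ((U g : Matrix (Fin d) (Fin d) ℂ)) M i j (q, j)
    rw [hk, Finset.sum_mul]
  rw [lhs_eq, rhs_eq]
  have swap1 : ∀ (f : Fin d → Fin d → Fin k → ℂ),
      (∑ q, ∑ p, ∑ j, f q p j) = ∑ j, ∑ q, ∑ p, f q p j := by
    intro f
    calc (∑ q, ∑ p, ∑ j, f q p j) = ∑ q, ∑ j, ∑ p, f q p j :=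
          Finset.sum_congr rfl fun q _ => Finset.sum_comm
      _ = ∑ j, ∑ q, ∑ p, f q p j := Finset.sum_comm
  exact swap1 _

lemma trace_MMH {n : Type} [Fintype n] (M : Matrix n n ℂ) :
    (M * Mᴴ).trace = ∑ w : n × n, M w.1 w.2 * star (M w.1 w.2) := by
  rw [Fintype.sum_prod_type]
  simp only [Matrix.trace, Matrix.diag, Matrix.mul_apply, Matrix.conjTranspose_apply]

lemma Psi0_norm (σ : Matrix (Fin d × Fin k) (Fin d × Fin k) ℂ)
    (hA : Aᴴ = A) (hAA : A * A = σ) (hσtr : σ.trace = 1) :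
    ∑ x : Fin d × (Fin k × ((Fin d × Fin k) × G)),
      Psi0 U A x * star (Psi0 U A x) = 1 := by
  haveI : Nonempty G := ⟨1⟩
  have hcard : (Fintype.card G : ℂ) ≠ 0 := Nat.cast_ne_zero.mpr Fintype.card_pos.ne'
  calc ∑ x : Fin d × (Fin k × ((Fin d × Fin k) × G)), Psi0 U A x * star (Psi0 U A x)
      = ∑ r : G × ((Fin d × Fin k) × (Fin d × Fin k)),
          Psi0 U A (r.2.1.1, (r.2.1.2, (r.2.2, r.1)))
            * star (Psi0 U A (r.2.1.1, (r.2.1.2, (r.2.2, r.1)))) :=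
        (Fintype.sum_equiv
          ⟨fun r => (r.2.1.1, (r.2.1.2, (r.2.2, r.1))),
           fun x => (x.2.2.2, ((x.1, x.2.1), x.2.2.1)),
           fun r => rfl, fun x => rfl⟩
          (fun r : G × ((Fin d × Fin k) × (Fin d × Fin k)) =>
            Psi0 U A (r.2.1.1, (r.2.1.2, (r.2.2, r.1)))
              * star (Psi0 U A (r.2.1.1, (r.2.1.2, (r.2.2, r.1)))))
          (fun x => Psi0 U A x * star (Psi0 U A x)) fun r => rfl).symm
    _ = ∑ r : G × ((Fin d × Fin k) × (Fin d × Fin k)),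
          (Fintype.card G : ℂ)⁻¹ * ((WkM U k r.1⁻¹ * A) r.2.1 r.2.2
            * star ((WkM U k r.1⁻¹ * A) r.2.1 r.2.2)) := by
        refine Finset.sum_congr rfl fun r _ => ?_
        simp only [Psi0, Prod.mk.eta]
        rw [← ccG G]
        simp only [star_mul']
        ring
    _ = ∑ h : G, ∑ w : (Fin d × Fin k) × (Fin d × Fin k),
          (Fintype.card G : ℂ)⁻¹ * ((WkM U k h⁻¹ * A) w.1 w.2
            * star ((WkM U k h⁻¹ * A) w.1 w.2)) :=
        Fintype.sum_prod_type (f := fun r : G × ((Fin d × Fin k) × (Fin d × Fin k)) =>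
          (Fintype.card G : ℂ)⁻¹ * ((WkM U k r.1⁻¹ * A) r.2.1 r.2.2
            * star ((WkM U k r.1⁻¹ * A) r.2.1 r.2.2)))
    _ = ∑ h : G, (Fintype.card G : ℂ)⁻¹
          * ((WkM U k h⁻¹ * A) * (WkM U k h⁻¹ * A)ᴴ).trace := by
        refine Finset.sum_congr rfl fun h _ => ?_
        rw [trace_MMH, Finset.mul_sum]
    _ = ∑ _h : G, (Fintype.card G : ℂ)⁻¹ * σ.trace := by
        refine Finset.sum_congr rfl fun h _ => ?_
        rw [conj_sigma_eq U A σ hA hAA, trace_conj_WkM]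
    _ = 1 := by
        rw [hσtr, Finset.sum_const, Finset.card_univ, nsmul_eq_mul, mul_one,
          mul_inv_cancel₀ hcard]

lemma ptrace_Psi0 (σ : Matrix (Fin d × Fin k) (Fin d × Fin k) ℂ)
    (hA : Aᴴ = A) (hAA : A * A = σ) (i i' : Fin d) :
    (∑ b : Fin k × ((Fin d × Fin k) × G), Psi0 U A (i, b) * star (Psi0 U A (i', b)))
      = (Fintype.card G : ℂ)⁻¹
          * ∑ h : G, ptrace (WkM U k h⁻¹ * σ * (WkM U k h⁻¹)ᴴ) i i' := by
  have hpt : ∀ h : G, ptrace ((WkM U k h⁻¹ * A) * (WkM U k h⁻¹ * A)ᴴ) i i'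
      = ∑ w : Fin k × (Fin d × Fin k),
          (WkM U k h⁻¹ * A) (i, w.1) w.2 * star ((WkM U k h⁻¹ * A) (i', w.1) w.2) := by
    intro h
    rw [Fintype.sum_prod_type]
    simp only [ptrace, Matrix.of_apply, Matrix.mul_apply, Matrix.conjTranspose_apply]
  calc (∑ b : Fin k × ((Fin d × Fin k) × G), Psi0 U A (i, b) * star (Psi0 U A (i', b)))
      = ∑ r : G × (Fin k × (Fin d × Fin k)),
          Psi0 U A (i, (r.2.1, (r.2.2, r.1))) * star (Psi0 U A (i', (r.2.1, (r.2.2, r.1)))) :=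
        (Fintype.sum_equiv
          ⟨fun r => (r.2.1, (r.2.2, r.1)), fun b => (b.2.2, (b.1, b.2.1)),
           fun r => rfl, fun b => rfl⟩
          (fun r : G × (Fin k × (Fin d × Fin k)) =>
            Psi0 U A (i, (r.2.1, (r.2.2, r.1))) * star (Psi0 U A (i', (r.2.1, (r.2.2, r.1)))))
          (fun b => Psi0 U A (i, b) * star (Psi0 U A (i', b))) fun r => rfl).symm
    _ = ∑ r : G × (Fin k × (Fin d × Fin k)),
          (Fintype.card G : ℂ)⁻¹ * ((WkM U k r.1⁻¹ * A) (i, r.2.1) r.2.2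
            * star ((WkM U k r.1⁻¹ * A) (i', r.2.1) r.2.2)) := by
        refine Finset.sum_congr rfl fun r _ => ?_
        simp only [Psi0]
        rw [← ccG G]
        simp only [star_mul']
        ring
    _ = ∑ h : G, ∑ w : Fin k × (Fin d × Fin k),
          (Fintype.card G : ℂ)⁻¹ * ((WkM U k h⁻¹ * A) (i, w.1) w.2
            * star ((WkM U k h⁻¹ * A) (i', w.1) w.2)) :=
        Fintype.sum_prod_type (f := fun r : G × (Fin k × (Fin d × Fin k)) =>
          (Fintype.card G : ℂ)⁻¹ * ((WkM U k r.1⁻¹ * A) (i, r.2.1) r.2.2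
            * star ((WkM U k r.1⁻¹ * A) (i', r.2.1) r.2.2)))
    _ = ∑ h : G, (Fintype.card G : ℂ)⁻¹
          * ptrace ((WkM U k h⁻¹ * A) * (WkM U k h⁻¹ * A)ᴴ) i i' := by
        refine Finset.sum_congr rfl fun h _ => ?_
        rw [hpt h, Finset.mul_sum]
    _ = (Fintype.card G : ℂ)⁻¹
          * ∑ h : G, ptrace (WkM U k h⁻¹ * σ * (WkM U k h⁻¹)ᴴ) i i' := by
        rw [Finset.mul_sum]
        exact Finset.sum_congr rfl fun h _ => by
          rw [conj_sigma_eq U A σ hA hAA]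

end Rest

/-- For a right-invariant cost function, any strategy `(σ,Q)` on `H⊗K` can be replaced by a
strategy whose input is a pure state `|Ψ⟩ ∈ H⊗L` purifying a `U`-invariant state, whose
pointwise cost is constant in `g`, whose average cost equals that of `(σ,Q)`, and whose
worst-case cost is no larger than that of `(σ,Q)`. -/
theorem stmt10 {G : Type} [Group G] [Fintype G] [DecidableEq G] {d k : ℕ}
    (U : G →* Matrix.unitaryGroup (Fin d) ℂ)
    (c : G → G → ℝ) (hc : ∀ ghat g h : G, c (ghat * h) (g * h) = c ghat g)
    (σ : Matrix (Fin d × Fin k) (Fin d × Fin k) ℂ)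
    (hσ : σ.PosSemidef) (hσtr : σ.trace = 1)
    (Q : G → Matrix (Fin d × Fin k) (Fin d × Fin k) ℂ)
    (hQpos : ∀ ghat, (Q ghat).PosSemidef) (hQsum : ∑ ghat, Q ghat = 1) :
    ∃ (l : ℕ) (Ψ : Fin d × Fin l → ℂ)
      (P : G → Matrix (Fin d × Fin l) (Fin d × Fin l) ℂ),
      (∑ x, ‖Ψ x‖ ^ 2 = 1) ∧
      (∀ g : G, (U g : Matrix (Fin d) (Fin d) ℂ)
          * ptrace (Matrix.vecMulVec Ψ (star Ψ))
          * (U g : Matrix (Fin d) (Fin d) ℂ)ᴴ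
        = ptrace (Matrix.vecMulVec Ψ (star Ψ))) ∧
      (∀ ghat, (P ghat).PosSemidef) ∧ (∑ ghat, P ghat = 1) ∧
      (∀ g g' : G,
        pCost (fun g => (U g : Matrix (Fin d) (Fin d) ℂ) ⊗ₖ (1 : Matrix (Fin l) (Fin l) ℂ))
            c (Matrix.vecMulVec Ψ (star Ψ)) P g
          = pCost (fun g => (U g : Matrix (Fin d) (Fin d) ℂ) ⊗ₖ (1 : Matrix (Fin l) (Fin l) ℂ))
            c (Matrix.vecMulVec Ψ (star Ψ)) P g') ∧
      (aCost (fun g => (U g : Matrix (Fin d) (Fin d) ℂ) ⊗ₖ (1 : Matrix (Fin l) (Fin l) ℂ))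
            c (Matrix.vecMulVec Ψ (star Ψ)) P
        = aCost (fun g => (U g : Matrix (Fin d) (Fin d) ℂ) ⊗ₖ (1 : Matrix (Fin k) (Fin k) ℂ))
            c σ Q) ∧
      (wCost (fun g => (U g : Matrix (Fin d) (Fin d) ℂ) ⊗ₖ (1 : Matrix (Fin l) (Fin l) ℂ))
            c (Matrix.vecMulVec Ψ (star Ψ)) P
        ≤ wCost (fun g => (U g : Matrix (Fin d) (Fin d) ℂ) ⊗ₖ (1 : Matrix (Fin k) (Fin k) ℂ))
            c σ Q) := by
  haveI : Nonempty G := ⟨1⟩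
  have hcardR : (Fintype.card G : ℝ) ≠ 0 := Nat.cast_ne_zero.mpr Fintype.card_pos.ne'
  set A := (open scoped MatrixOrder in CFC.sqrt σ) with hAdef
  have hA : Aᴴ = A := by open scoped MatrixOrder in exact (CFC.sqrt_nonneg σ).posSemidef.1
  have hAA : A * A = σ := by open scoped MatrixOrder in exact CFC.sqrt_mul_sqrt_self σ hσ.nonneg
  set l := Fintype.card (Fin k × ((Fin d × Fin k) × G)) with hl
  set e : (Fin k × ((Fin d × Fin k) × G)) ≃ Fin l :=
    Fintype.equivFin (Fin k × ((Fin d × Fin k) × G)) with he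
  set fE : (Fin d × Fin l) ≃ (Fin d × (Fin k × ((Fin d × Fin k) × G))) :=
    (Equiv.refl (Fin d)).prodCongr e.symm with hfE
  -- transported POVM and state
  refine ⟨l, fun x => Psi0 U A (fE x), fun gh => (P0 Q gh).submatrix ⇑fE ⇑fE,
    ?_, ?_, ?_, ?_, ?_, ?_, ?_⟩
  · -- normalization
    have h1 := Psi0_norm U A σ hA hAA hσtr
    have h2 : ∑ x : Fin d × Fin l, Psi0 U A (fE x) * star (Psi0 U A (fE x))
        = ∑ z, Psi0 U A z * star (Psi0 U A z) :=
      Fintype.sum_equiv fE _ _ (fun x => rfl)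
    calc ∑ x : Fin d × Fin l, ‖Psi0 U A (fE x)‖ ^ 2
        = ∑ x : Fin d × Fin l, (Psi0 U A (fE x) * star (Psi0 U A (fE x))).re := by
          refine Finset.sum_congr rfl fun x _ => ?_
          rw [show (star (Psi0 U A (fE x))) = (starRingEnd ℂ) (Psi0 U A (fE x)) from rfl,
            Complex.mul_conj, Complex.sq_norm, Complex.ofReal_re]
      _ = (∑ x : Fin d × Fin l, Psi0 U A (fE x) * star (Psi0 U A (fE x))).re :=
          (Complex.re_sum _ _).symm
      _ = 1 := by rw [h2, h1, Complex.one_re]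
  · -- invariance of the reduced state
    set ρb : Matrix (Fin d) (Fin d) ℂ :=
      (Fintype.card G : ℂ)⁻¹ • ∑ h : G, ptrace (WkM U k h⁻¹ * σ * (WkM U k h⁻¹)ᴴ) with hρb
    have hPt : ptrace (Matrix.vecMulVec (fun x => Psi0 U A (fE x))
        (star (fun x => Psi0 U A (fE x)))) = ρb := by
      ext i i'
      have hL : ptrace (Matrix.vecMulVec (fun x => Psi0 U A (fE x))
          (star (fun x => Psi0 U A (fE x)))) i i'
          = ∑ a : Fin l, Psi0 U A (fE (i, a)) * star (Psi0 U A (fE (i', a))) := by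
        simp only [ptrace, Matrix.of_apply, Matrix.vecMulVec_apply, Pi.star_apply]
      rw [hL]
      have hswap : ∑ a : Fin l, Psi0 U A (fE (i, a)) * star (Psi0 U A (fE (i', a)))
          = ∑ b, Psi0 U A (i, b) * star (Psi0 U A (i', b)) :=
        Fintype.sum_equiv e.symm
          (fun a => Psi0 U A (fE (i, a)) * star (Psi0 U A (fE (i', a))))
          (fun b => Psi0 U A (i, b) * star (Psi0 U A (i', b))) (fun a => rfl)
      rw [hswap, ptrace_Psi0 U A σ hA hAA i i', hρb]
      simp [Matrix.smul_apply, Matrix.sum_apply, smul_eq_mul]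
    intro g
    rw [hPt]
    have hW2 : ∀ x y : G, WkM U k x * (WkM U k y * σ * (WkM U k y)ᴴ) * (WkM U k x)ᴴ
        = WkM U k (x * y) * σ * (WkM U k (x * y))ᴴ := by
      intro x y
      rw [WkM_conjTranspose, WkM_conjTranspose, WkM_conjTranspose]
      simp only [← Matrix.mul_assoc]
      rw [WkM_mul, Matrix.mul_assoc (WkM U k (x * y) * σ), WkM_mul, ← _root_.mul_inv_rev]
    calc (U g : Matrix (Fin d) (Fin d) ℂ) * ρb * ((U g : Matrix (Fin d) (Fin d) ℂ))ᴴ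
        = (Fintype.card G : ℂ)⁻¹ • ∑ h : G,
            (U g : Matrix (Fin d) (Fin d) ℂ)
              * ptrace (WkM U k h⁻¹ * σ * (WkM U k h⁻¹)ᴴ)
              * ((U g : Matrix (Fin d) (Fin d) ℂ))ᴴ := by
          rw [hρb, Matrix.mul_smul, Matrix.smul_mul, Finset.mul_sum, Finset.sum_mul]
      _ = (Fintype.card G : ℂ)⁻¹ • ∑ h : G,
            ptrace (WkM U k (g * h⁻¹) * σ * (WkM U k (g * h⁻¹))ᴴ) := by
          exact congrArg _ (Finset.sum_congr rfl fun h _ => by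
            rw [ptrace_conj U g _, hW2 g h⁻¹])
      _ = (Fintype.card G : ℂ)⁻¹ • ∑ h : G,
            ptrace (WkM U k h⁻¹ * σ * (WkM U k h⁻¹)ᴴ) := by
          exact congrArg _ (Fintype.sum_equiv (Equiv.mulRight g⁻¹)
            (fun h => ptrace (WkM U k (g * h⁻¹) * σ * (WkM U k (g * h⁻¹))ᴴ))
            (fun h => ptrace (WkM U k h⁻¹ * σ * (WkM U k h⁻¹)ᴴ))
            (fun h => by simp [_root_.mul_inv_rev]))
      _ = ρb := hρb.symm
  · -- positivity of the POVM elements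
    exact fun gh => Matrix.PosSemidef.submatrix (P0_posSemidef Q hQpos gh) ⇑fE
  · -- POVM sums to identity
    have hs := P0_sum Q hQsum
    calc ∑ gh, (P0 Q gh).submatrix ⇑fE ⇑fE
        = (∑ gh, P0 Q gh).submatrix ⇑fE ⇑fE := by
          ext x y
          simp [Matrix.sum_apply, Matrix.submatrix_apply]
      _ = (1 : Matrix (Fin d × (Fin k × ((Fin d × Fin k) × G)))
            (Fin d × (Fin k × ((Fin d × Fin k) × G))) ℂ).submatrix ⇑fE ⇑fE := by rw [hs]
      _ = 1 := Matrix.submatrix_one_equiv fE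
  all_goals {
    have hWl : ∀ g : G, ((U g : Matrix (Fin d) (Fin d) ℂ)
          ⊗ₖ (1 : Matrix (Fin l) (Fin l) ℂ))
        = (((U g : Matrix (Fin d) (Fin d) ℂ)
            ⊗ₖ (1 : Matrix (Fin k × ((Fin d × Fin k) × G))
              (Fin k × ((Fin d × Fin k) × G)) ℂ))).submatrix ⇑fE ⇑fE := by
      intro g
      ext x y
      simp only [Matrix.submatrix_apply, Matrix.kroneckerMap_apply, Matrix.one_apply, hfE,
        Equiv.prodCongr_apply, Equiv.coe_refl, Prod.map_fst, Prod.map_snd, id_eq]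
      by_cases h : x.2 = y.2
      · rw [if_pos h, if_pos (by rw [h])]
      · rw [if_neg h, if_neg (fun hh => h (e.symm.injective hh))]
    have hrho : Matrix.vecMulVec (fun x => Psi0 U A (fE x))
          (star (fun x => Psi0 U A (fE x)))
        = (Matrix.vecMulVec (Psi0 U A) (star (Psi0 U A))).submatrix ⇑fE ⇑fE := by
      ext x y
      simp only [Matrix.vecMulVec_apply, Matrix.submatrix_apply, Pi.star_apply]
    have htrace : ∀ gh g : G,
        ((P0 Q gh).submatrix ⇑fE ⇑fE
          * (((U g : Matrix (Fin d) (Fin d) ℂ) ⊗ₖ (1 : Matrix (Fin l) (Fin l) ℂ))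
            * Matrix.vecMulVec (fun x => Psi0 U A (fE x))
                (star (fun x => Psi0 U A (fE x)))
            * (((U g : Matrix (Fin d) (Fin d) ℂ)
              ⊗ₖ (1 : Matrix (Fin l) (Fin l) ℂ)))ᴴ)).trace
        = (Fintype.card G : ℂ)⁻¹
            * ∑ h : G, (Q (gh * h⁻¹)
                * (WkM U k (g * h⁻¹) * σ * (WkM U k (g * h⁻¹))ᴴ)).trace := by
      intro gh g
      rw [hWl g, hrho, Matrix.conjTranspose_submatrix,
        Matrix.submatrix_mul_equiv, Matrix.submatrix_mul_equiv, Matrix.submatrix_mul_equiv,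
        trace_submatrix_equiv' fE, key_trace U A σ hA hAA Q gh g]
    have hpc : ∀ g : G,
        pCost (fun g => (U g : Matrix (Fin d) (Fin d) ℂ)
            ⊗ₖ (1 : Matrix (Fin l) (Fin l) ℂ)) c
          (Matrix.vecMulVec (fun x => Psi0 U A (fE x))
            (star (fun x => Psi0 U A (fE x))))
          (fun gh => (P0 Q gh).submatrix ⇑fE ⇑fE) g
        = aCost (fun g => (U g : Matrix (Fin d) (Fin d) ℂ)
            ⊗ₖ (1 : Matrix (Fin k) (Fin k) ℂ)) c σ Q := by
      intro g
      simp only [pCost, aCost]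
      calc ∑ gh : G, c gh g * (((P0 Q gh).submatrix ⇑fE ⇑fE
              * (((U g : Matrix (Fin d) (Fin d) ℂ) ⊗ₖ (1 : Matrix (Fin l) (Fin l) ℂ))
                * Matrix.vecMulVec (fun x => Psi0 U A (fE x))
                    (star (fun x => Psi0 U A (fE x)))
                * (((U g : Matrix (Fin d) (Fin d) ℂ)
                  ⊗ₖ (1 : Matrix (Fin l) (Fin l) ℂ)))ᴴ)).trace).re
          = ∑ gh : G, ∑ h : G, (Fintype.card G : ℝ)⁻¹
              * (c (gh * h⁻¹) (g * h⁻¹)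
                * ((Q (gh * h⁻¹)
                  * (WkM U k (g * h⁻¹) * σ * (WkM U k (g * h⁻¹))ᴴ)).trace).re) := by
            refine Finset.sum_congr rfl fun gh _ => ?_
            rw [htrace gh g,
              show ((Fintype.card G : ℂ))⁻¹ = (((Fintype.card G : ℝ)⁻¹ : ℝ) : ℂ) by
                push_cast; rfl,
              Complex.re_ofReal_mul, Complex.re_sum, Finset.mul_sum, Finset.mul_sum]
            refine Finset.sum_congr rfl fun h _ => ?_
            have hcgh : c gh g = c (gh * h⁻¹) (g * h⁻¹) := by
              have h3 := hc (gh * h⁻¹) (g * h⁻¹) h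
              rw [inv_mul_cancel_right, inv_mul_cancel_right] at h3
              exact h3
            rw [hcgh]
            ring
        _ = ∑ p : G × G, (Fintype.card G : ℝ)⁻¹
              * (c (p.1 * p.2⁻¹) (g * p.2⁻¹)
                * ((Q (p.1 * p.2⁻¹)
                  * (WkM U k (g * p.2⁻¹) * σ * (WkM U k (g * p.2⁻¹))ᴴ)).trace).re) :=
            (Fintype.sum_prod_type (f := fun p : G × G => (Fintype.card G : ℝ)⁻¹
              * (c (p.1 * p.2⁻¹) (g * p.2⁻¹)
                * ((Q (p.1 * p.2⁻¹)
                  * (WkM U k (g * p.2⁻¹) * σ * (WkM U k (g * p.2⁻¹))ᴴ)).trace).re))).symm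
        _ = ∑ q : G × G, (Fintype.card G : ℝ)⁻¹
              * (c q.2 q.1
                * ((Q q.2 * (WkM U k q.1 * σ * (WkM U k q.1)ᴴ)).trace).re) :=
            Fintype.sum_equiv
              ⟨fun p => (g * p.2⁻¹, p.1 * p.2⁻¹),
               fun q => (q.2 * q.1⁻¹ * g, q.1⁻¹ * g),
               fun p => by
                obtain ⟨a, b⟩ := p
                simp only [Prod.mk.injEq]
                constructor <;> group,
               fun q => by
                obtain ⟨a, b⟩ := q
                simp only [Prod.mk.injEq]
                constructor <;> group⟩
              _ _ (fun p => rfl)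
        _ = ∑ g' : G, ∑ gh' : G, (Fintype.card G : ℝ)⁻¹
              * (c gh' g'
                * ((Q gh' * (WkM U k g' * σ * (WkM U k g')ᴴ)).trace).re) :=
            Fintype.sum_prod_type (f := fun q : G × G => (Fintype.card G : ℝ)⁻¹
              * (c q.2 q.1
                * ((Q q.2 * (WkM U k q.1 * σ * (WkM U k q.1)ᴴ)).trace).re))
        _ = (Fintype.card G : ℝ)⁻¹ * ∑ g' : G, ∑ gh' : G,
              c gh' g' * ((Q gh' * (WkM U k g' * σ * (WkM U k g')ᴴ)).trace).re := by
            rw [Finset.mul_sum]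
            exact Finset.sum_congr rfl fun g' _ => by rw [Finset.mul_sum]
        _ = (Fintype.card G : ℝ)⁻¹ * ∑ g' : G,
              ∑ gh' : G, c gh' g'
                * ((Q gh' * (((U g' : Matrix (Fin d) (Fin d) ℂ)
                    ⊗ₖ (1 : Matrix (Fin k) (Fin k) ℂ)) * σ
                  * (((U g' : Matrix (Fin d) (Fin d) ℂ)
                    ⊗ₖ (1 : Matrix (Fin k) (Fin k) ℂ)))ᴴ)).trace).re := rfl
    first
    | exact fun g g' => (hpc g).trans (hpc g').symm
    | { -- average cost
        rw [aCost,
          Finset.sum_congr rfl fun g (_ : g ∈ Finset.univ) => hpc g,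
          Finset.sum_const, Finset.card_univ, nsmul_eq_mul, ← mul_assoc,
          inv_mul_cancel₀ hcardR, one_mul] }
    | { -- worst-case cost
        have hwl : wCost (fun g => (U g : Matrix (Fin d) (Fin d) ℂ)
              ⊗ₖ (1 : Matrix (Fin l) (Fin l) ℂ)) c
            (Matrix.vecMulVec (fun x => Psi0 U A (fE x))
              (star (fun x => Psi0 U A (fE x))))
            (fun gh => (P0 Q gh).submatrix ⇑fE ⇑fE)
          = aCost (fun g => (U g : Matrix (Fin d) (Fin d) ℂ)
              ⊗ₖ (1 : Matrix (Fin k) (Fin k) ℂ)) c σ Q := by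
          rw [wCost]
          apply le_antisymm
          · exact Finset.sup'_le _ _ fun g _ => le_of_eq (hpc g)
          · exact le_trans (le_of_eq (hpc 1).symm)
              (Finset.le_sup' _ (Finset.mem_univ 1))
        rw [hwl, aCost, wCost]
        have hb : ∀ g : G, pCost (fun g => (U g : Matrix (Fin d) (Fin d) ℂ)
              ⊗ₖ (1 : Matrix (Fin k) (Fin k) ℂ)) c σ Q g
            ≤ Finset.univ.sup' ⟨(1 : G), Finset.mem_univ _⟩
                (pCost (fun g => (U g : Matrix (Fin d) (Fin d) ℂ)
                  ⊗ₖ (1 : Matrix (Fin k) (Fin k) ℂ)) c σ Q) :=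
          fun g => Finset.le_sup' _ (Finset.mem_univ g)
        calc (Fintype.card G : ℝ)⁻¹ * ∑ g : G,
              pCost (fun g => (U g : Matrix (Fin d) (Fin d) ℂ)
                ⊗ₖ (1 : Matrix (Fin k) (Fin k) ℂ)) c σ Q g
            ≤ (Fintype.card G : ℝ)⁻¹ * ∑ _g : G,
                Finset.univ.sup' ⟨(1 : G), Finset.mem_univ _⟩
                  (pCost (fun g => (U g : Matrix (Fin d) (Fin d) ℂ)
                    ⊗ₖ (1 : Matrix (Fin k) (Fin k) ℂ)) c σ Q) :=
              mul_le_mul_of_nonneg_left (Finset.sum_le_sum fun g _ => hb g)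
                (by positivity)
          _ = _ := by
              rw [Finset.sum_const, Finset.card_univ, nsmul_eq_mul, ← mul_assoc,
                inv_mul_cancel₀ hcardR, one_mul] }
  }

end
end

section
/- Let c : G×G → ℝ be an invariant cost function (c(hĝk,hgk) = c(ĝ,g) for all h,k ∈ G), let ρ be an isotropic state on H̃ (Ũ(g)Ũ^R(g) ρ Ũ^R(g)† Ũ(g)† = ρ for all g), and let P_ĝ := (1/|G|) Ũ(ĝ) ξ Ũ(ĝ)† be a covariant POVM with positive semidefinite seed ξ. Define ξ' := (1/|G|) Σ_{h∈G} Ũ(h)Ũ^R(h) ξ Ũ^R(h)† Ũ(h)† and P'_ĝ := (1/|G|) Ũ(ĝ) ξ' Ũ(ĝ)†. Then ξ' is positive semidefinite and isotropic, P' is a POVM, and c_ave(ρ,P') = c_ave(ρ,P). -/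
open Matrix Kronecker ComplexOrder

noncomputable section

/-- The modular conjugate representation `Ũ^R(g) = ⊕_μ I_{d_μ} ⊗ conj (U^μ(g))`. -/
def UtildeR {G : Type} [Group G] {ι : Type} [Fintype ι] [DecidableEq ι] (d : ι → ℕ)
    (U : ∀ μ, G →* Matrix.unitaryGroup (Fin (d μ)) ℂ) (g : G) :
    Matrix (Σ μ, Fin (d μ) × Fin (d μ)) (Σ μ, Fin (d μ) × Fin (d μ)) ℂ :=
  Matrix.blockDiagonal'
    (fun μ => (1 : Matrix (Fin (d μ)) (Fin (d μ)) ℂ) ⊗ₖ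
      ((U μ g : Matrix (Fin (d μ)) (Fin (d μ)) ℂ).map (starRingEnd ℂ)))

section Helpers

variable {G : Type} [Group G] [Fintype G] [DecidableEq G]
variable {ι : Type} [Fintype ι] [DecidableEq ι] {d : ι → ℕ}

lemma kron_conjT {l m p q : Type} (A : Matrix l m ℂ) (B : Matrix p q ℂ) :
    (A ⊗ₖ B)ᴴ = Aᴴ ⊗ₖ Bᴴ := by
  ext ⟨i, j⟩ ⟨k, l⟩
  simp [conjTranspose_apply, kroneckerMap_apply, mul_comm]

variable (d) in
lemma Utilde_mul (U : ∀ μ, G →* Matrix.unitaryGroup (Fin (d μ)) ℂ) (g h : G) :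
    Utilde d U g * Utilde d U h = Utilde d U (g * h) := by
  unfold Utilde
  rw [← blockDiagonal'_mul]
  refine congrArg _ (funext fun μ => ?_)
  rw [← mul_kronecker_mul, one_mul]
  have h2 : ((U μ g : Matrix (Fin (d μ)) (Fin (d μ)) ℂ) * (U μ h : Matrix (Fin (d μ)) (Fin (d μ)) ℂ)) = ((U μ (g * h) : Matrix (Fin (d μ)) (Fin (d μ)) ℂ)) := by
    rw [_root_.map_mul]; rfl
  rw [h2]

variable (d) in
lemma UtildeR_mul (U : ∀ μ, G →* Matrix.unitaryGroup (Fin (d μ)) ℂ) (g h : G) :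
    UtildeR d U g * UtildeR d U h = UtildeR d U (g * h) := by
  unfold UtildeR
  rw [← blockDiagonal'_mul]
  refine congrArg _ (funext fun μ => ?_)
  rw [← mul_kronecker_mul, one_mul, ← Matrix.map_mul]
  have h2 : ((U μ g : Matrix (Fin (d μ)) (Fin (d μ)) ℂ) * (U μ h : Matrix (Fin (d μ)) (Fin (d μ)) ℂ)) = ((U μ (g * h) : Matrix (Fin (d μ)) (Fin (d μ)) ℂ)) := by
    rw [_root_.map_mul]; rfl
  rw [h2]

variable (d) in
lemma Utilde_one (U : ∀ μ, G →* Matrix.unitaryGroup (Fin (d μ)) ℂ) :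
    Utilde d U (1 : G) = 1 := by
  unfold Utilde
  have h1 : (fun μ => ((U μ 1 : Matrix (Fin (d μ)) (Fin (d μ)) ℂ)) ⊗ₖ (1 : Matrix (Fin (d μ)) (Fin (d μ)) ℂ)) = (1 : ∀ μ, Matrix (Fin (d μ) × Fin (d μ)) (Fin (d μ) × Fin (d μ)) ℂ) := by
    funext μ
    rw [_root_.map_one]
    rw [show ((1 : Matrix.unitaryGroup (Fin (d μ)) ℂ) : Matrix (Fin (d μ)) (Fin (d μ)) ℂ) = 1 from rfl]
    exact one_kronecker_one
  rw [h1, blockDiagonal'_one]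

variable (d) in
lemma UtildeR_one (U : ∀ μ, G →* Matrix.unitaryGroup (Fin (d μ)) ℂ) :
    UtildeR d U (1 : G) = 1 := by
  unfold UtildeR
  have h1 : (fun μ => (1 : Matrix (Fin (d μ)) (Fin (d μ)) ℂ) ⊗ₖ ((U μ 1 : Matrix (Fin (d μ)) (Fin (d μ)) ℂ).map (starRingEnd ℂ))) = (1 : ∀ μ, Matrix (Fin (d μ) × Fin (d μ)) (Fin (d μ) × Fin (d μ)) ℂ) := by
    funext μ
    rw [_root_.map_one]
    rw [show ((1 : Matrix.unitaryGroup (Fin (d μ)) ℂ) : Matrix (Fin (d μ)) (Fin (d μ)) ℂ) = 1 from rfl]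
    rw [show ((1 : Matrix (Fin (d μ)) (Fin (d μ)) ℂ).map (starRingEnd ℂ)) = 1 by
      ext i j; by_cases h : i = j <;> simp [Matrix.one_apply, h]]
    exact one_kronecker_one
  rw [h1, blockDiagonal'_one]

variable (d) in
lemma Utilde_conjT (U : ∀ μ, G →* Matrix.unitaryGroup (Fin (d μ)) ℂ) (g : G) :
    (Utilde d U g)ᴴ = Utilde d U g⁻¹ := by
  unfold Utilde
  rw [blockDiagonal'_conjTranspose]
  refine congrArg _ (funext fun μ => ?_)
  rw [kron_conjT, conjTranspose_one]
  congr 1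
  rw [_root_.map_inv]
  rfl

variable (d) in
lemma UtildeR_conjT (U : ∀ μ, G →* Matrix.unitaryGroup (Fin (d μ)) ℂ) (g : G) :
    (UtildeR d U g)ᴴ = UtildeR d U g⁻¹ := by
  unfold UtildeR
  rw [blockDiagonal'_conjTranspose]
  refine congrArg _ (funext fun μ => ?_)
  rw [kron_conjT, conjTranspose_one]
  have h2 : ((U μ g : Matrix (Fin (d μ)) (Fin (d μ)) ℂ).map (starRingEnd ℂ))ᴴ
      = ((U μ g⁻¹ : Matrix (Fin (d μ)) (Fin (d μ)) ℂ).map (starRingEnd ℂ)) := by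
    rw [_root_.map_inv, Matrix.UnitaryGroup.inv_val]
    ext i j
    simp [Matrix.conjTranspose_apply, Matrix.map_apply, Matrix.star_apply]
  rw [h2]

variable (d) in
lemma Utilde_comm (U : ∀ μ, G →* Matrix.unitaryGroup (Fin (d μ)) ℂ) (g h : G) :
    Utilde d U g * UtildeR d U h = UtildeR d U h * Utilde d U g := by
  unfold Utilde UtildeR
  rw [← blockDiagonal'_mul, ← blockDiagonal'_mul]
  refine congrArg _ (funext fun μ => ?_)
  rw [← mul_kronecker_mul, ← mul_kronecker_mul, one_mul, mul_one, one_mul, mul_one]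

variable (d) in
lemma Utilde_unitary (U : ∀ μ, G →* Matrix.unitaryGroup (Fin (d μ)) ℂ) (g : G) :
    Utilde d U g * (Utilde d U g)ᴴ = 1 := by
  rw [Utilde_conjT, Utilde_mul, mul_inv_cancel, Utilde_one]

variable (d) in
lemma UtildeR_unitary (U : ∀ μ, G →* Matrix.unitaryGroup (Fin (d μ)) ℂ) (g : G) :
    UtildeR d U g * (UtildeR d U g)ᴴ = 1 := by
  rw [UtildeR_conjT, UtildeR_mul, mul_inv_cancel, UtildeR_one]
lemma posSemidef_sum {n κ : Type} [Fintype n] (s : Finset κ) (f : κ → Matrix n n ℂ)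
    (h : ∀ i ∈ s, (f i).PosSemidef) : (∑ i ∈ s, f i).PosSemidef :=
  Finset.sum_induction f _ (fun _ _ ha hb => ha.add hb) Matrix.PosSemidef.zero h

lemma posSemidef_real_smul {n : Type} [Fintype n] {M : Matrix n n ℂ} (hM : M.PosSemidef)
    {r : ℝ} (hr : 0 ≤ r) : (((r : ℂ)) • M).PosSemidef := by
  constructor
  · show (((r : ℂ)) • M)ᴴ = _
    rw [conjTranspose_smul, hM.1]
    congr 1
    exact Complex.conj_ofReal r
  · intro x
    have hr' : (0:ℂ) ≤ (r : ℂ) := by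
      rw [Complex.le_def]
      simp [hr]
    simpa using (hM.smul hr').2 x

lemma trace_conj_pair {n : Type} [Fintype n] (B C P Q : Matrix n n ℂ) :
    Matrix.trace ((B * P * Bᴴ) * (C * Q * Cᴴ)) = Matrix.trace (P * (Bᴴ * C * Q * (Cᴴ * B))) := by
  rw [show B * P * Bᴴ * (C * Q * Cᴴ) = B * (P * Bᴴ * (C * Q * Cᴴ)) by simp only [mul_assoc],
    trace_mul_comm]
  congr 1
  simp only [mul_assoc]

lemma avg_reduction {G : Type} [Group G] [Fintype G] (c S : G → G → ℝ)
    (hcc : ∀ h ghat g : G, c ghat g = c (h⁻¹*ghat*h) (h⁻¹*g*h)) :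
    (∑ g : G, ∑ ghat : G, c ghat g * ((Fintype.card G:ℝ)⁻¹ * ((Fintype.card G:ℝ)⁻¹ *
        ∑ h : G, S (h⁻¹*ghat*h) (h⁻¹*g*h))))
    = ∑ g : G, ∑ ghat : G, c ghat g * ((Fintype.card G:ℝ)⁻¹ * S ghat g) := by
  have hcardR : ((Fintype.card G : ℝ)) ≠ 0 := by exact_mod_cast Fintype.card_ne_zero
  set r : ℝ := (Fintype.card G : ℝ)⁻¹ with hr
  have reindex : ∀ h : G, (∑ g : G, ∑ ghat : G, c ghat g * S (h⁻¹*ghat*h) (h⁻¹*g*h))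
      = ∑ g : G, ∑ ghat : G, c ghat g * S ghat g := by
    intro h
    refine Fintype.sum_equiv ((Equiv.mulLeft h⁻¹).trans (Equiv.mulRight h)) _ _ fun g => ?_
    refine Fintype.sum_equiv ((Equiv.mulLeft h⁻¹).trans (Equiv.mulRight h)) _ _ fun ghat => ?_
    simp only [Equiv.trans_apply, Equiv.coe_mulLeft, Equiv.coe_mulRight]
    rw [← hcc h ghat g]
  have rhs : ∑ g : G, ∑ ghat : G, c ghat g * (r * S ghat g)
      = r * ∑ g : G, ∑ ghat : G, c ghat g * S ghat g := by
    rw [Finset.mul_sum]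
    refine Finset.sum_congr rfl fun g _ => ?_
    rw [Finset.mul_sum]
    exact Finset.sum_congr rfl fun ghat _ => by ring
  rw [rhs]
  calc (∑ g : G, ∑ ghat : G, c ghat g * (r * (r * ∑ h : G, S (h⁻¹*ghat*h) (h⁻¹*g*h))))
      = ∑ g : G, ∑ ghat : G, ∑ h : G, r * (r * (c ghat g * S (h⁻¹*ghat*h) (h⁻¹*g*h))) := by
        refine Finset.sum_congr rfl fun g _ => Finset.sum_congr rfl fun ghat _ => ?_
        rw [Finset.mul_sum, Finset.mul_sum, Finset.mul_sum]
        exact Finset.sum_congr rfl fun h _ => by ring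
    _ = ∑ g : G, ∑ h : G, ∑ ghat : G, r * (r * (c ghat g * S (h⁻¹*ghat*h) (h⁻¹*g*h))) := by
        exact Finset.sum_congr rfl fun g _ => Finset.sum_comm
    _ = ∑ h : G, ∑ g : G, ∑ ghat : G, r * (r * (c ghat g * S (h⁻¹*ghat*h) (h⁻¹*g*h))) :=
        Finset.sum_comm
    _ = ∑ h : G, r * (r * ∑ g : G, ∑ ghat : G, c ghat g * S (h⁻¹*ghat*h) (h⁻¹*g*h)) := by
        refine Finset.sum_congr rfl fun h _ => ?_
        rw [Finset.mul_sum, Finset.mul_sum]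
        refine Finset.sum_congr rfl fun g _ => ?_
        rw [Finset.mul_sum, Finset.mul_sum]
    _ = ∑ _h : G, r * (r * ∑ g : G, ∑ ghat : G, c ghat g * S ghat g) := by
        exact Finset.sum_congr rfl fun h _ => by rw [reindex h]
    _ = (Fintype.card G : ℝ) * (r * (r * ∑ g : G, ∑ ghat : G, c ghat g * S ghat g)) := by
        rw [Finset.sum_const, Finset.card_univ, nsmul_eq_mul]
    _ = r * ∑ g : G, ∑ ghat : G, c ghat g * S ghat g := by
        rw [show (Fintype.card G : ℝ) * (r * (r * ∑ g : G, ∑ ghat : G, c ghat g * S ghat g))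
          = ((Fintype.card G : ℝ) * r) * (r * ∑ g : G, ∑ ghat : G, c ghat g * S ghat g) by ring,
          mul_inv_cancel₀ hcardR, one_mul]

end Helpers

set_option maxHeartbeats 1000000 in
/-- For an invariant cost function and an isotropic input state, symmetrizing the seed of a
covariant POVM gives an isotropic positive semidefinite seed `ξ'` whose covariant POVM `P'`
has the same average cost as the original one. -/
theorem stmt12 {G : Type} [Group G] [Fintype G] [DecidableEq G]
    {ι : Type} [Fintype ι] [DecidableEq ι] (d : ι → ℕ) (hd : ∀ μ, 0 < d μ)
    (U : ∀ μ, G →* Matrix.unitaryGroup (Fin (d μ)) ℂ)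
    (hirr : ∀ μ, IsIrrep (U μ))
    (hineq : Pairwise fun μ ν => ¬ RepEquiv (U μ) (U ν))
    (c : G → G → ℝ) (hc : ∀ h k ghat g : G, c (h * ghat * k) (h * g * k) = c ghat g)
    (ρ : Matrix (Σ μ, Fin (d μ) × Fin (d μ)) (Σ μ, Fin (d μ) × Fin (d μ)) ℂ)
    (hρ : ρ.PosSemidef) (hρtr : ρ.trace = 1)
    (hρiso : ∀ g : G, (Utilde d U g * UtildeR d U g) * ρ * (Utilde d U g * UtildeR d U g)ᴴ = ρ)
    (ξ : Matrix (Σ μ, Fin (d μ) × Fin (d μ)) (Σ μ, Fin (d μ) × Fin (d μ)) ℂ)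
    (hξ : ξ.PosSemidef)
    (hnorm : (Fintype.card G : ℂ)⁻¹ •
      ∑ ghat : G, Utilde d U ghat * ξ * (Utilde d U ghat)ᴴ = 1)
    (ξ' : Matrix (Σ μ, Fin (d μ) × Fin (d μ)) (Σ μ, Fin (d μ) × Fin (d μ)) ℂ)
    (hξ' : ξ' = (Fintype.card G : ℂ)⁻¹ •
      ∑ h : G, (Utilde d U h * UtildeR d U h) * ξ * (Utilde d U h * UtildeR d U h)ᴴ) :
    ξ'.PosSemidef ∧
    (∀ g : G, (Utilde d U g * UtildeR d U g) * ξ' * (Utilde d U g * UtildeR d U g)ᴴ = ξ') ∧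
    (∀ ghat : G, ((Fintype.card G : ℂ)⁻¹ •
        (Utilde d U ghat * ξ' * (Utilde d U ghat)ᴴ)).PosSemidef) ∧
    ((Fintype.card G : ℂ)⁻¹ • ∑ ghat : G, Utilde d U ghat * ξ' * (Utilde d U ghat)ᴴ = 1) ∧
    (aCost (Utilde d U) c ρ
        (fun ghat => (Fintype.card G : ℂ)⁻¹ • (Utilde d U ghat * ξ' * (Utilde d U ghat)ᴴ))
      = aCost (Utilde d U) c ρ
        (fun ghat => (Fintype.card G : ℂ)⁻¹ • (Utilde d U ghat * ξ * (Utilde d U ghat)ᴴ))) := by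
  set A := Utilde d U with hA
  set R := UtildeR d U with hR
  set V : G → Matrix (Σ μ, Fin (d μ) × Fin (d μ)) (Σ μ, Fin (d μ) × Fin (d μ)) ℂ :=
    fun g => A g * R g with hV
  have hAmul : ∀ g h : G, A g * A h = A (g * h) := fun g h => Utilde_mul d U g h
  have hAct : ∀ g : G, (A g)ᴴ = A g⁻¹ := fun g => Utilde_conjT d U g
  have hAone : A (1 : G) = 1 := Utilde_one d U
  have hRmul : ∀ g h : G, R g * R h = R (g * h) := fun g h => UtildeR_mul d U g h
  have hRct : ∀ g : G, (R g)ᴴ = R g⁻¹ := fun g => UtildeR_conjT d U g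
  have hRone : R (1 : G) = 1 := UtildeR_one d U
  have hARcomm : ∀ g h : G, A g * R h = R h * A g := fun g h => Utilde_comm d U g h
  have hcardC : ((Fintype.card G : ℂ)) ≠ 0 := by exact_mod_cast Fintype.card_ne_zero
  have hcinv : ((Fintype.card G : ℂ))⁻¹ = ((((Fintype.card G : ℝ))⁻¹ : ℝ) : ℂ) := by
    push_cast; ring
  have hrpos : (0:ℝ) ≤ ((Fintype.card G : ℝ))⁻¹ := by positivity
  have hVmul : ∀ g h : G, V g * V h = V (g * h) := by
    intro g h
    show A g * R g * (A h * R h) = A (g*h) * R (g*h)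
    calc A g * R g * (A h * R h) = A g * (R g * A h) * R h := by simp only [mul_assoc]
      _ = A g * (A h * R g) * R h := by rw [← hARcomm h g]
      _ = (A g * A h) * (R g * R h) := by simp only [mul_assoc]
      _ = A (g*h) * R (g*h) := by rw [hAmul, hRmul]
  have hVct : ∀ g : G, (V g)ᴴ = V g⁻¹ := by
    intro g
    show (A g * R g)ᴴ = A g⁻¹ * R g⁻¹
    rw [conjTranspose_mul, hAct, hRct, ← hARcomm]
  have hVone : V 1 = 1 := by
    show A 1 * R 1 = 1
    rw [hAone, hRone, one_mul]
  have hVu : ∀ g : G, V g * (V g)ᴴ = 1 := by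
    intro g; rw [hVct, hVmul, mul_inv_cancel, hVone]
  -- claim 1
  have claim1 : ξ'.PosSemidef := by
    rw [hξ', hcinv]
    refine posSemidef_real_smul ?_ hrpos
    refine posSemidef_sum _ _ fun h _ => ?_
    exact hξ.mul_mul_conjTranspose_same (V h)
  -- claim 2
  have claim2 : ∀ g : G, V g * ξ' * (V g)ᴴ = ξ' := by
    intro g
    conv_lhs => rw [hξ']
    rw [Matrix.mul_smul, Matrix.smul_mul, hξ']
    congr 1
    rw [Finset.mul_sum, Finset.sum_mul]
    refine Fintype.sum_bijective (fun h => g * h) (Group.mulLeft_bijective g) _ _ fun h => ?_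
    show V g * (V h * ξ * (V h)ᴴ) * (V g)ᴴ = V (g * h) * ξ * (V (g * h))ᴴ
    calc V g * (V h * ξ * (V h)ᴴ) * (V g)ᴴ
        = (V g * V h) * ξ * ((V h)ᴴ * (V g)ᴴ) := by simp only [mul_assoc]
      _ = V (g*h) * ξ * (V (g*h))ᴴ := by
          rw [hVct g, hVct h, hVct (g*h), hVmul g h, hVmul h⁻¹ g⁻¹, ← _root_.mul_inv_rev]
  -- claim 3
  have claim3 : ∀ ghat : G, ((Fintype.card G : ℂ)⁻¹ •
      (A ghat * ξ' * (A ghat)ᴴ)).PosSemidef := by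
    intro ghat
    rw [hcinv]
    exact posSemidef_real_smul (claim1.mul_mul_conjTranspose_same (A ghat)) hrpos
  -- claim 4
  have hS : ∑ k : G, A k * ξ * (A k)ᴴ = (Fintype.card G : ℂ) • 1 := by
    have h2 := congrArg (fun M => (Fintype.card G : ℂ) • M) hnorm
    simpa [smul_smul, mul_inv_cancel₀ hcardC] using h2
  have inner : ∀ h : G, ∑ ghat : G, A ghat * (V h * ξ * (V h)ᴴ) * (A ghat)ᴴ
      = (Fintype.card G : ℂ) • 1 := by
    intro h
    have step1 : ∀ ghat : G, A ghat * (V h * ξ * (V h)ᴴ) * (A ghat)ᴴ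
        = A (ghat * h) * (R h * ξ * (R h)ᴴ) * (A (ghat * h))ᴴ := by
      intro ghat
      show A ghat * (A h * R h * ξ * (A h * R h)ᴴ) * (A ghat)ᴴ = _
      rw [conjTranspose_mul, hAct (ghat * h), hAct h, hAct ghat]
      calc A ghat * (A h * R h * ξ * ((R h)ᴴ * A h⁻¹)) * A ghat⁻¹
          = (A ghat * A h) * (R h * ξ * (R h)ᴴ) * (A h⁻¹ * A ghat⁻¹) := by
            simp only [mul_assoc]
        _ = A (ghat * h) * (R h * ξ * (R h)ᴴ) * A ((ghat * h)⁻¹) := by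
            rw [hAmul, hAmul, ← _root_.mul_inv_rev]
    calc ∑ ghat : G, A ghat * (V h * ξ * (V h)ᴴ) * (A ghat)ᴴ
        = ∑ ghat : G, A (ghat * h) * (R h * ξ * (R h)ᴴ) * (A (ghat * h))ᴴ :=
          Finset.sum_congr rfl fun ghat _ => step1 ghat
      _ = ∑ k : G, A k * (R h * ξ * (R h)ᴴ) * (A k)ᴴ :=
          Fintype.sum_bijective (fun x => x * h) (Group.mulRight_bijective h) _ _
            fun x => rfl
      _ = R h * (∑ k : G, A k * ξ * (A k)ᴴ) * (R h)ᴴ := by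
          rw [Finset.mul_sum, Finset.sum_mul]
          refine Finset.sum_congr rfl fun k _ => ?_
          calc A k * (R h * ξ * (R h)ᴴ) * (A k)ᴴ
              = (A k * R h) * ξ * ((R h)ᴴ * (A k)ᴴ) := by simp only [mul_assoc]
            _ = (R h * A k) * ξ * ((A k)ᴴ * (R h)ᴴ) := by
                rw [hARcomm, hAct, hRct, hARcomm, ← hAct, ← hRct]
            _ = R h * (A k * ξ * (A k)ᴴ) * (R h)ᴴ := by simp only [mul_assoc]
      _ = (Fintype.card G : ℂ) • 1 := by
          have hRu : R h * (R h)ᴴ = 1 := by rw [hRct, hRmul, mul_inv_cancel, hRone]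
          rw [hS, Matrix.mul_smul, Matrix.smul_mul, mul_one, hRu]
  have expand : ∀ ghat : G, A ghat * ξ' * (A ghat)ᴴ = (Fintype.card G : ℂ)⁻¹ •
      ∑ h : G, A ghat * (V h * ξ * (V h)ᴴ) * (A ghat)ᴴ := by
    intro ghat
    rw [hξ', Matrix.mul_smul, Matrix.smul_mul, Finset.mul_sum, Finset.sum_mul]
  have claim4 : (Fintype.card G : ℂ)⁻¹ • ∑ ghat : G, A ghat * ξ' * (A ghat)ᴴ = 1 := by
    calc (Fintype.card G : ℂ)⁻¹ • ∑ ghat : G, A ghat * ξ' * (A ghat)ᴴ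
        = (Fintype.card G : ℂ)⁻¹ • ∑ ghat : G, (Fintype.card G : ℂ)⁻¹ •
            ∑ h : G, A ghat * (V h * ξ * (V h)ᴴ) * (A ghat)ᴴ := by
          rw [Finset.sum_congr rfl fun ghat _ => expand ghat]
      _ = (Fintype.card G : ℂ)⁻¹ • ((Fintype.card G : ℂ)⁻¹ •
            ∑ ghat : G, ∑ h : G, A ghat * (V h * ξ * (V h)ᴴ) * (A ghat)ᴴ) := by
          rw [← Finset.smul_sum]
      _ = (Fintype.card G : ℂ)⁻¹ • ((Fintype.card G : ℂ)⁻¹ •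
            ∑ h : G, ∑ ghat : G, A ghat * (V h * ξ * (V h)ᴴ) * (A ghat)ᴴ) := by
          rw [Finset.sum_comm]
      _ = (Fintype.card G : ℂ)⁻¹ • ((Fintype.card G : ℂ)⁻¹ •
            ∑ _h : G, (Fintype.card G : ℂ) • (1 : Matrix (Σ μ, Fin (d μ) × Fin (d μ))
              (Σ μ, Fin (d μ) × Fin (d μ)) ℂ)) := by
          rw [Finset.sum_congr rfl fun h _ => inner h]
      _ = 1 := by
          rw [Finset.sum_const, Finset.card_univ, ← Nat.cast_smul_eq_nsmul ℂ]
          rw [smul_smul, smul_smul, smul_smul]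
          rw [show (Fintype.card G : ℂ)⁻¹ * (Fintype.card G : ℂ)⁻¹ * (Fintype.card G : ℂ) *
            (Fintype.card G : ℂ) = 1 by field_simp, one_smul]
  -- claim 5
  have hcardR : ((Fintype.card G : ℝ)) ≠ 0 := by exact_mod_cast Fintype.card_ne_zero
  have hAV : ∀ a h : G, A a * V h = A (a*h) * R h := by
    intro a h
    show A a * (A h * R h) = _
    rw [← mul_assoc, hAmul]
  have hBC : ∀ a b h : G, (A a * V h)ᴴ * (A b * V h) = A ((a*h)⁻¹ * (b*h)) := by
    intro a b h
    rw [hAV, hAV, conjTranspose_mul, hAct, hRct]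
    calc R h⁻¹ * A (a*h)⁻¹ * (A (b*h) * R h)
        = R h⁻¹ * (A (a*h)⁻¹ * A (b*h)) * R h := by simp only [mul_assoc]
      _ = R h⁻¹ * A ((a*h)⁻¹ * (b*h)) * R h := by rw [hAmul]
      _ = A ((a*h)⁻¹ * (b*h)) * (R h⁻¹ * R h) := by
          rw [← hARcomm]; simp only [mul_assoc]
      _ = A ((a*h)⁻¹ * (b*h)) := by rw [hRmul, inv_mul_cancel, hRone, mul_one]
  have key : ∀ h ghat g : G,
      Matrix.trace ((A ghat * (V h * ξ * (V h)ᴴ) * (A ghat)ᴴ) * (A g * ρ * (A g)ᴴ))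
      = Matrix.trace ((A (h⁻¹*ghat*h) * ξ * (A (h⁻¹*ghat*h))ᴴ) *
          (A (h⁻¹*g*h) * ρ * (A (h⁻¹*g*h))ᴴ)) := by
    intro h ghat g
    have hB : A ghat * (V h * ξ * (V h)ᴴ) * (A ghat)ᴴ
        = (A ghat * V h) * ξ * (A ghat * V h)ᴴ := by
      rw [show (A ghat * V h)ᴴ = (V h)ᴴ * (A ghat)ᴴ from conjTranspose_mul _ _]
      simp only [mul_assoc]
    have hN : A g * ρ * (A g)ᴴ = (A g * V h) * ρ * (A g * V h)ᴴ := by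
      conv_lhs => rw [← hρiso h]
      show A g * (V h * ρ * (V h)ᴴ) * (A g)ᴴ = _
      rw [show (A g * V h)ᴴ = (V h)ᴴ * (A g)ᴴ from conjTranspose_mul _ _]
      simp only [mul_assoc]
    rw [hB, hN, trace_conj_pair, trace_conj_pair, hBC, hBC, hAct, hAmul, hAct, hAmul]
    rw [show (ghat*h)⁻¹ * (g*h) = (h⁻¹*ghat*h)⁻¹ * (h⁻¹*g*h) by group,
      show (g*h)⁻¹ * (ghat*h) = (h⁻¹*g*h)⁻¹ * (h⁻¹*ghat*h) by group]
  have hcc : ∀ h ghat g : G, c ghat g = c (h⁻¹*ghat*h) (h⁻¹*g*h) := by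
    intro h ghat g
    have h2 := hc h h⁻¹ (h⁻¹*ghat*h) (h⁻¹*g*h)
    rw [show h * (h⁻¹*ghat*h) * h⁻¹ = ghat by group,
      show h * (h⁻¹*g*h) * h⁻¹ = g by group] at h2
    exact h2
  have traceP : ∀ ghat g : G,
      (Matrix.trace (((Fintype.card G : ℂ)⁻¹ • (A ghat * ξ * (A ghat)ᴴ)) *
        (A g * ρ * (A g)ᴴ))).re
      = (Fintype.card G : ℝ)⁻¹ *
        (Matrix.trace ((A ghat * ξ * (A ghat)ᴴ) * (A g * ρ * (A g)ᴴ))).re := by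
    intro ghat g
    rw [Matrix.smul_mul, trace_smul, smul_eq_mul, hcinv, Complex.re_ofReal_mul]
  have traceP' : ∀ ghat g : G,
      (Matrix.trace (((Fintype.card G : ℂ)⁻¹ • (A ghat * ξ' * (A ghat)ᴴ)) *
        (A g * ρ * (A g)ᴴ))).re
      = (Fintype.card G : ℝ)⁻¹ * ((Fintype.card G : ℝ)⁻¹ *
        ∑ h : G, (Matrix.trace ((A (h⁻¹*ghat*h) * ξ * (A (h⁻¹*ghat*h))ᴴ) *
          (A (h⁻¹*g*h) * ρ * (A (h⁻¹*g*h))ᴴ))).re) := by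
    intro ghat g
    rw [Matrix.smul_mul, trace_smul, smul_eq_mul, expand ghat, Matrix.smul_mul, trace_smul,
      smul_eq_mul, Finset.sum_mul, trace_sum]
    rw [Finset.sum_congr rfl fun h _ => key h ghat g]
    rw [hcinv, Complex.re_ofReal_mul, Complex.re_ofReal_mul, Complex.re_sum]
  have claim5 : aCost A c ρ
        (fun ghat => (Fintype.card G : ℂ)⁻¹ • (A ghat * ξ' * (A ghat)ᴴ))
      = aCost A c ρ
        (fun ghat => (Fintype.card G : ℂ)⁻¹ • (A ghat * ξ * (A ghat)ᴴ)) := by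
    unfold aCost pCost
    beta_reduce
    congr 1
    calc (∑ g : G, ∑ ghat : G, c ghat g *
          (Matrix.trace (((Fintype.card G : ℂ)⁻¹ • (A ghat * ξ' * (A ghat)ᴴ)) *
            (A g * ρ * (A g)ᴴ))).re)
        = ∑ g : G, ∑ ghat : G, c ghat g * ((Fintype.card G : ℝ)⁻¹ * ((Fintype.card G : ℝ)⁻¹ *
            ∑ h : G, (Matrix.trace ((A (h⁻¹*ghat*h) * ξ * (A (h⁻¹*ghat*h))ᴴ) *
              (A (h⁻¹*g*h) * ρ * (A (h⁻¹*g*h))ᴴ))).re)) := by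
          refine Finset.sum_congr rfl fun g _ => Finset.sum_congr rfl fun ghat _ => ?_
          rw [traceP' ghat g]
      _ = ∑ g : G, ∑ ghat : G, c ghat g * ((Fintype.card G : ℝ)⁻¹ *
            (Matrix.trace ((A ghat * ξ * (A ghat)ᴴ) * (A g * ρ * (A g)ᴴ))).re) :=
          avg_reduction c
            (fun a b => (Matrix.trace ((A a * ξ * (A a)ᴴ) * (A b * ρ * (A b)ᴴ))).re) hcc
      _ = ∑ g : G, ∑ ghat : G, c ghat g *
          (Matrix.trace (((Fintype.card G : ℂ)⁻¹ • (A ghat * ξ * (A ghat)ᴴ)) *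
            (A g * ρ * (A g)ᴴ))).re := by
          refine Finset.sum_congr rfl fun g _ => Finset.sum_congr rfl fun ghat _ => ?_
          rw [traceP ghat g]
  exact ⟨claim1, claim2, claim3, claim4, claim5⟩

end
end

section
/- Let |Φ⟩ := ⊕_μ √(p_μ/d_μ)|I_{d_μ}⟩⟩ be a class state with all weights p_μ > 0, set Φ_g := Ũ(g)Φ, and define ρ_G := (1/|G|) Σ_{g∈G} |Φ_g⟩⟨Φ_g|. Then: (i) ρ_G = ⊕_μ (p_μ/d_μ²) I_{d_μ}⊗I_{d_μ}, so ρ_G is positive definite on H̃; (ii) ρ_G^{-1/2}|Φ_ĝ⟩ = Ũ(ĝ)|η⟩ for every ĝ ∈ G; (iii) consequently the class POVM satisfies E_ĝ = (1/|G|)·ρ_G^{-1/2}|Φ_ĝ⟩⟨Φ_ĝ|ρ_G^{-1/2}, i.e., the class POVM is the square-root measurement associated to the ensemble {(1/|G|)|Φ_g⟩⟨Φ_g|}_{g∈G}. -/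
open Matrix Kronecker ComplexOrder

noncomputable section

/-- The class vector `|η⟩ = ⊕_μ √d_μ |I_{d_μ}⟩⟩`. -/
def etaVec {ι : Type} (d : ι → ℕ) : (Σ μ, Fin (d μ) × Fin (d μ)) → ℂ :=
  fun q => (Real.sqrt (d q.1) : ℂ) * (if q.2.1 = q.2.2 then 1 else 0)

/-- The class state `|Φ⟩ = ⊕_μ √(p_μ/d_μ) |I_{d_μ}⟩⟩`. -/
def classVec {ι : Type} (d : ι → ℕ) (p : ι → ℝ) : (Σ μ, Fin (d μ) × Fin (d μ)) → ℂ :=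
  fun q => (Real.sqrt (p q.1 / d q.1) : ℂ) * (if q.2.1 = q.2.2 then 1 else 0)


/-- The orbit `|Φ_g⟩ = Ũ(g)|Φ⟩` of a class state. -/
def classOrbit {G : Type} [Group G] {ι : Type} [Fintype ι] [DecidableEq ι] (d : ι → ℕ)
    (U : ∀ μ, G →* Matrix.unitaryGroup (Fin (d μ)) ℂ) (p : ι → ℝ) (g : G) :
    (Σ μ, Fin (d μ) × Fin (d μ)) → ℂ :=
  (Utilde d U g).mulVec (classVec d p)

/-- The average state `ρ_G = |G|⁻¹ Σ_g |Φ_g⟩⟨Φ_g|` of the orbit of a class state. -/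
def rhoG {G : Type} [Group G] [Fintype G] {ι : Type} [Fintype ι] [DecidableEq ι] (d : ι → ℕ)
    (U : ∀ μ, G →* Matrix.unitaryGroup (Fin (d μ)) ℂ) (p : ι → ℝ) :
    Matrix (Σ μ, Fin (d μ) × Fin (d μ)) (Σ μ, Fin (d μ) × Fin (d μ)) ℂ :=
  (Fintype.card G : ℂ)⁻¹ •
    ∑ g : G, Matrix.vecMulVec (classOrbit d U p g) (star (classOrbit d U p g))

/-! ### Auxiliary lemmas -/

section Schur

variable {G : Type} [Group G] [Fintype G]

lemma avg_intertwines {n m : ℕ} (V : G →* Matrix.unitaryGroup (Fin n) ℂ)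
    (W : G →* Matrix.unitaryGroup (Fin m) ℂ) (E : Matrix (Fin n) (Fin m) ℂ) (h : G) :
    (∑ g : G, (V g : Matrix (Fin n) (Fin n) ℂ) * E * star (W g : Matrix (Fin m) (Fin m) ℂ))
      * (W h : Matrix (Fin m) (Fin m) ℂ)
    = (V h : Matrix (Fin n) (Fin n) ℂ)
      * ∑ g : G, (V g : Matrix (Fin n) (Fin n) ℂ) * E * star (W g : Matrix (Fin m) (Fin m) ℂ) := by
  rw [Matrix.sum_mul, Matrix.mul_sum]
  refine (Fintype.sum_equiv (Equiv.mulLeft h) _ _ fun g => ?_).symm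
  have h1 : ((W (h * g) : Matrix.unitaryGroup (Fin m) ℂ) : Matrix (Fin m) (Fin m) ℂ)
      = (W h : Matrix (Fin m) (Fin m) ℂ) * (W g : Matrix (Fin m) (Fin m) ℂ) := by
    rw [_root_.map_mul]; rfl
  have h2 : ((V (h * g) : Matrix.unitaryGroup (Fin n) ℂ) : Matrix (Fin n) (Fin n) ℂ)
      = (V h : Matrix (Fin n) (Fin n) ℂ) * (V g : Matrix (Fin n) (Fin n) ℂ) := by
    rw [_root_.map_mul]; rfl
  have h3 : star ((W h : Matrix (Fin m) (Fin m) ℂ)) * (W h : Matrix (Fin m) (Fin m) ℂ) = 1 :=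
    (W h).2.1
  simp only [Equiv.coe_mulLeft, h1, h2, StarMul.star_mul]
  symm
  calc (V h : Matrix (Fin n) (Fin n) ℂ) * (V g : Matrix (Fin n) (Fin n) ℂ) * E
      * (star ((W g : Matrix (Fin m) (Fin m) ℂ)) * star ((W h : Matrix (Fin m) (Fin m) ℂ)))
      * (W h : Matrix (Fin m) (Fin m) ℂ)
      = (V h : Matrix (Fin n) (Fin n) ℂ) * ((V g : Matrix (Fin n) (Fin n) ℂ) * E
        * star ((W g : Matrix (Fin m) (Fin m) ℂ)))
        * (star ((W h : Matrix (Fin m) (Fin m) ℂ)) * (W h : Matrix (Fin m) (Fin m) ℂ)) := by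
        simp only [Matrix.mul_assoc]
    _ = _ := by rw [h3, Matrix.mul_one]

/-- Schur for a single irrep. -/
lemma schur_same {n : ℕ} (V : G →* Matrix.unitaryGroup (Fin n) ℂ) (hn : 0 < n) (hV : IsIrrep V)
    (E : Matrix (Fin n) (Fin n) ℂ) :
    ∑ g : G, (V g : Matrix (Fin n) (Fin n) ℂ) * E * star (V g : Matrix (Fin n) (Fin n) ℂ)
      = (((Fintype.card G : ℂ) * E.trace) / n) • 1 := by
  obtain ⟨c, hc⟩ := hV _ (avg_intertwines V V E)
  rw [hc]
  have htr : (∑ g : G, (V g : Matrix (Fin n) (Fin n) ℂ) * E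
      * star (V g : Matrix (Fin n) (Fin n) ℂ)).trace = (Fintype.card G : ℂ) * E.trace := by
    rw [Matrix.trace_sum]
    rw [Finset.sum_congr rfl (fun g _ => ?_), Finset.sum_const, Finset.card_univ, nsmul_eq_mul]
    rw [Matrix.trace_mul_cycle, (V g).2.1, Matrix.one_mul]
  rw [hc] at htr
  have hn' : (n : ℂ) ≠ 0 := Nat.cast_ne_zero.mpr hn.ne'
  rw [Matrix.trace_smul, Matrix.trace_one] at htr
  simp only [Fintype.card_fin, smul_eq_mul] at htr
  rw [← htr]
  field_simp

/-- Schur for inequivalent irreps: the average is zero. -/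
lemma schur_off {n m : ℕ} (V : G →* Matrix.unitaryGroup (Fin n) ℂ)
    (W : G →* Matrix.unitaryGroup (Fin m) ℂ) (hn : 0 < n) (hm : 0 < m)
    (hV : IsIrrep V) (hW : IsIrrep W)
    (hne : ¬ RepEquiv W V) (E : Matrix (Fin n) (Fin m) ℂ) :
    ∑ g : G, (V g : Matrix (Fin n) (Fin n) ℂ) * E * star (W g : Matrix (Fin m) (Fin m) ℂ)
      = 0 := by
  set T := ∑ g : G, (V g : Matrix (Fin n) (Fin n) ℂ) * E * star (W g : Matrix (Fin m) (Fin m) ℂ)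
    with hTdef
  have hT : ∀ h : G, T * (W h : Matrix (Fin m) (Fin m) ℂ)
      = (V h : Matrix (Fin n) (Fin n) ℂ) * T := avg_intertwines V W E
  have hWcoe : ∀ h : G, ((W h⁻¹ : Matrix.unitaryGroup (Fin m) ℂ) : Matrix (Fin m) (Fin m) ℂ)
      = (W h : Matrix (Fin m) (Fin m) ℂ)ᴴ := by
    intro h; rw [map_inv]; rfl
  have hVcoe : ∀ h : G, ((V h⁻¹ : Matrix.unitaryGroup (Fin n) ℂ) : Matrix (Fin n) (Fin n) ℂ)
      = (V h : Matrix (Fin n) (Fin n) ℂ)ᴴ := by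
    intro h; rw [map_inv]; rfl
  have hT' : ∀ h : G, Tᴴ * (V h : Matrix (Fin n) (Fin n) ℂ)
      = (W h : Matrix (Fin m) (Fin m) ℂ) * Tᴴ := by
    intro h
    have := congrArg Matrix.conjTranspose (hT h⁻¹)
    rw [Matrix.conjTranspose_mul, Matrix.conjTranspose_mul, hWcoe, hVcoe,
      Matrix.conjTranspose_conjTranspose, Matrix.conjTranspose_conjTranspose] at this
    exact this.symm
  obtain ⟨c, hc⟩ := hW (Tᴴ * T) (fun h => by
    rw [Matrix.mul_assoc, hT h, ← Matrix.mul_assoc, hT' h, Matrix.mul_assoc])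
  obtain ⟨c', hc'⟩ := hV (T * Tᴴ) (fun h => by
    rw [Matrix.mul_assoc, hT' h, ← Matrix.mul_assoc, hT h, Matrix.mul_assoc])
  by_cases hc0 : c = 0
  · rw [hc0, zero_smul] at hc
    exact Matrix.conjTranspose_mul_self_eq_zero.mp hc
  · exfalso
    have htr : c * m = c' * n := by
      have := Matrix.trace_mul_comm Tᴴ T
      rw [hc, hc'] at this
      simpa [Matrix.trace_smul, Matrix.trace_one] using this
    have hc'0 : c' ≠ 0 := by
      intro h0
      rw [h0, zero_mul] at htr
      exact hc0 (by
        rcases mul_eq_zero.mp htr with h | h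
        · exact h
        · exact absurd h (Nat.cast_ne_zero.mpr hm.ne'))
    refine hne ⟨T, ⟨?_, ?_⟩, hT⟩
    · intro x y hxy
      have h2 := congrArg (Tᴴ.mulVec) hxy
      rw [Matrix.mulVec_mulVec, Matrix.mulVec_mulVec, hc] at h2
      exact smul_right_injective _ hc0
        (by simpa [Matrix.smul_mulVec, Matrix.one_mulVec] using h2)
    · intro y
      refine ⟨c'⁻¹ • Tᴴ.mulVec y, ?_⟩
      rw [Matrix.mulVec_smul, Matrix.mulVec_mulVec, hc', Matrix.smul_mulVec,
        Matrix.one_mulVec, smul_smul, inv_mul_cancel₀ hc'0, one_smul]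

lemma entry_sum_eq {n m : ℕ} (V : G →* Matrix.unitaryGroup (Fin n) ℂ)
    (W : G →* Matrix.unitaryGroup (Fin m) ℂ) (i : Fin n) (j : Fin n) (k l : Fin m) :
    ∑ g : G, (V g : Matrix (Fin n) (Fin n) ℂ) i j
        * starRingEnd ℂ ((W g : Matrix (Fin m) (Fin m) ℂ) k l)
      = (∑ g : G, (V g : Matrix (Fin n) (Fin n) ℂ) * Matrix.single j l (1 : ℂ)
          * star (W g : Matrix (Fin m) (Fin m) ℂ)) i k := by
  rw [Matrix.sum_apply]
  refine Finset.sum_congr rfl fun g _ => ?_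
  rw [Matrix.mul_apply]
  simp only [Matrix.mul_apply, Matrix.single, Matrix.of_apply,
    Matrix.star_apply, ite_mul, one_mul, zero_mul, mul_ite, mul_zero, mul_one]
  simp [Finset.sum_ite_eq, ite_and, RCLike.star_def]

/-- entrywise Schur orthogonality, same irrep -/
lemma schur_same_entry {n : ℕ} (V : G →* Matrix.unitaryGroup (Fin n) ℂ)
    (hn : 0 < n) (hV : IsIrrep V) (i j k l : Fin n) :
    ∑ g : G, (V g : Matrix (Fin n) (Fin n) ℂ) i j
        * starRingEnd ℂ ((V g : Matrix (Fin n) (Fin n) ℂ) k l)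
      = ((Fintype.card G : ℂ) / n) * (if i = k then 1 else 0) * (if j = l then 1 else 0) := by
  rw [entry_sum_eq, schur_same V hn hV]
  have htr : (Matrix.single j l (1 : ℂ)).trace = if j = l then 1 else 0 := by
    simp only [Matrix.trace, Matrix.diag, Matrix.single, Matrix.of_apply, ite_and,
      Finset.sum_ite_eq, Finset.mem_univ, if_true]
    by_cases h : j = l
    · simp [h]
    · simp [h, Ne.symm h]
  rw [htr]
  rw [Matrix.smul_apply, Matrix.one_apply]
  simp only [smul_eq_mul]
  by_cases hik : i = k <;> by_cases hjl : j = l <;> simp [hik, hjl] <;> ring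

/-- entrywise Schur orthogonality, inequivalent irreps -/
lemma schur_off_entry {n m : ℕ} (V : G →* Matrix.unitaryGroup (Fin n) ℂ)
    (W : G →* Matrix.unitaryGroup (Fin m) ℂ) (hn : 0 < n) (hm : 0 < m)
    (hV : IsIrrep V) (hW : IsIrrep W)
    (hne : ¬ RepEquiv W V) (i j : Fin n) (k l : Fin m) :
    ∑ g : G, (V g : Matrix (Fin n) (Fin n) ℂ) i j
        * starRingEnd ℂ ((W g : Matrix (Fin m) (Fin m) ℂ) k l) = 0 := by
  rw [entry_sum_eq, schur_off V W hn hm hV hW hne]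
  simp

end Schur

section Orbit

variable {G : Type} [Group G] [Fintype G] {ι : Type} [Fintype ι] [DecidableEq ι]

lemma Utilde_mulVec (d : ι → ℕ) (U : ∀ μ, G →* Matrix.unitaryGroup (Fin (d μ)) ℂ) (g : G)
    (f : ι → ℝ) (μ : ι) (x : Fin (d μ) × Fin (d μ)) :
    (Utilde d U g).mulVec
      (fun q : Σ μ, Fin (d μ) × Fin (d μ) => ((f q.1 : ℝ) : ℂ) * (if q.2.1 = q.2.2 then 1 else 0))
      ⟨μ, x⟩
      = ((f μ : ℝ) : ℂ) * (U μ g : Matrix (Fin (d μ)) (Fin (d μ)) ℂ) x.1 x.2 := by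
  rw [Matrix.mulVec, dotProduct, ← Finset.univ_sigma_univ, Finset.sum_sigma]
  rw [Finset.sum_eq_single_of_mem μ (Finset.mem_univ μ)]
  · rw [Utilde]
    simp only [Matrix.blockDiagonal'_apply_eq, Matrix.kroneckerMap_apply, Matrix.one_apply]
    rw [← Finset.univ_product_univ, Finset.sum_product]
    simp only [mul_ite, mul_one, mul_zero, ite_mul, zero_mul]
    simp [Finset.sum_ite_eq', Finset.sum_ite_eq]
    ring
  · intro ν _ hν
    apply Finset.sum_eq_zero
    intro y _
    rw [Utilde, Matrix.blockDiagonal'_apply_ne _ _ _ (Ne.symm hν)]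
    exact zero_mul _

lemma classOrbit_apply (d : ι → ℕ) (U : ∀ μ, G →* Matrix.unitaryGroup (Fin (d μ)) ℂ)
    (p : ι → ℝ) (g : G) (μ : ι) (x : Fin (d μ) × Fin (d μ)) :
    classOrbit d U p g ⟨μ, x⟩
      = ((Real.sqrt (p μ / d μ) : ℝ) : ℂ) * (U μ g : Matrix (Fin (d μ)) (Fin (d μ)) ℂ) x.1 x.2 :=
  Utilde_mulVec d U g (fun μ => Real.sqrt (p μ / d μ)) μ x

lemma etaOrbit_apply (d : ι → ℕ) (U : ∀ μ, G →* Matrix.unitaryGroup (Fin (d μ)) ℂ)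
    (g : G) (μ : ι) (x : Fin (d μ) × Fin (d μ)) :
    (Utilde d U g).mulVec (etaVec d) ⟨μ, x⟩
      = ((Real.sqrt (d μ) : ℝ) : ℂ) * (U μ g : Matrix (Fin (d μ)) (Fin (d μ)) ℂ) x.1 x.2 :=
  Utilde_mulVec d U g (fun μ => Real.sqrt (d μ)) μ x

end Orbit

lemma conj_vecMulVec_s17 {N : Type} [Fintype N] (A : Matrix N N ℂ) (x : N → ℂ) :
    A * Matrix.vecMulVec x (star x) * Aᴴ
      = Matrix.vecMulVec (A.mulVec x) (star (A.mulVec x)) := by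
  ext i j
  simp only [Matrix.mul_apply, Matrix.vecMulVec_apply, Pi.star_apply, Matrix.conjTranspose_apply,
    Matrix.mulVec, dotProduct]
  rw [star_sum, Finset.sum_mul_sum]
  rw [Finset.sum_comm]
  refine Finset.sum_congr rfl fun b _ => ?_
  rw [Finset.sum_mul]
  refine Finset.sum_congr rfl fun a _ => ?_
  simp only [star_mul']
  ring

section Main

variable {G : Type} [Group G] [Fintype G] {ι : Type} [Fintype ι] [DecidableEq ι]

lemma rhoG_eq (d : ι → ℕ) (hd : ∀ μ, 0 < d μ)
    (U : ∀ μ, G →* Matrix.unitaryGroup (Fin (d μ)) ℂ)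
    (hirr : ∀ μ, IsIrrep (U μ))
    (hineq : Pairwise fun μ ν => ¬ RepEquiv (U μ) (U ν))
    (p : ι → ℝ) (hp : ∀ μ, 0 < p μ) :
    rhoG d U p = Matrix.blockDiagonal' (fun μ => ((p μ / (d μ : ℝ) ^ 2 : ℝ) : ℂ) •
        (1 : Matrix (Fin (d μ) × Fin (d μ)) (Fin (d μ) × Fin (d μ)) ℂ)) := by
  have hcard : (Fintype.card G : ℂ) ≠ 0 := Nat.cast_ne_zero.mpr Fintype.card_ne_zero
  ext ⟨μ, i, j⟩ ⟨ν, k, l⟩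
  rw [rhoG, Matrix.smul_apply, Matrix.sum_apply]
  simp only [Matrix.vecMulVec_apply, Pi.star_apply, classOrbit_apply, smul_eq_mul]
  have hstep : ∀ g : G,
      ((Real.sqrt (p μ / d μ) : ℝ) : ℂ) * (U μ g : Matrix (Fin (d μ)) (Fin (d μ)) ℂ) i j
        * star (((Real.sqrt (p ν / d ν) : ℝ) : ℂ)
            * (U ν g : Matrix (Fin (d ν)) (Fin (d ν)) ℂ) k l)
      = ((Real.sqrt (p μ / d μ) : ℝ) : ℂ) * ((Real.sqrt (p ν / d ν) : ℝ) : ℂ)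
          * ((U μ g : Matrix (Fin (d μ)) (Fin (d μ)) ℂ) i j
            * starRingEnd ℂ ((U ν g : Matrix (Fin (d ν)) (Fin (d ν)) ℂ) k l)) := by
    intro g
    rw [star_mul']
    rw [show star (((Real.sqrt (p ν / d ν) : ℝ) : ℂ)) = ((Real.sqrt (p ν / d ν) : ℝ) : ℂ) from
      Complex.conj_ofReal _]
    rw [RCLike.star_def]
    ring
  rw [Finset.sum_congr rfl fun g _ => hstep g, ← Finset.mul_sum]
  rcases eq_or_ne μ ν with rfl | hμν
  · rw [Matrix.blockDiagonal'_apply_eq]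
    rw [schur_same_entry (U μ) (hd μ) (hirr μ)]
    rw [Matrix.smul_apply, Matrix.one_apply]
    have hsq : ((Real.sqrt (p μ / d μ) : ℝ) : ℂ) * ((Real.sqrt (p μ / d μ) : ℝ) : ℂ)
        = ((p μ / d μ : ℝ) : ℂ) := by
      rw [← Complex.ofReal_mul, Real.mul_self_sqrt (div_nonneg (hp μ).le (Nat.cast_nonneg _))]
    have hd' : ((d μ : ℝ) : ℂ) ≠ 0 := by
      simp only [ne_eq, Complex.ofReal_natCast, Nat.cast_eq_zero]
      exact (hd μ).ne'
    by_cases hik : i = k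
    · by_cases hjl : j = l
      · simp only [hik, hjl, if_true, Prod.mk.injEq, and_self, mul_one, smul_eq_mul]
        rw [← mul_assoc, hsq]
        push_cast
        field_simp
      · simp [Prod.ext_iff, hjl]
    · simp [Prod.ext_iff, hik]
  · rw [Matrix.blockDiagonal'_apply_ne _ _ _ hμν]
    rw [schur_off_entry (U μ) (U ν) (hd μ) (hd ν) (hirr μ) (hirr ν) (hineq hμν.symm) i j k l]
    simp

/-- The class POVM is the square-root measurement of the orbit of a class state:
(i) `ρ_G = ⊕_μ (p_μ/d_μ²) I ⊗ I` is positive definite; (ii) for the (unique) positive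
semidefinite `S` with `S² = ρ_G⁻¹` (i.e. `S = ρ_G^{-1/2}`) one has `S|Φ_ĝ⟩ = Ũ(ĝ)|η⟩`;
(iii) hence `E_ĝ = |G|⁻¹ S|Φ_ĝ⟩⟨Φ_ĝ|S`. -/
theorem stmt17 {G : Type} [Group G] [Fintype G] [DecidableEq G]
    {ι : Type} [Fintype ι] [DecidableEq ι] (d : ι → ℕ) (hd : ∀ μ, 0 < d μ)
    (U : ∀ μ, G →* Matrix.unitaryGroup (Fin (d μ)) ℂ)
    (hirr : ∀ μ, IsIrrep (U μ))
    (hineq : Pairwise fun μ ν => ¬ RepEquiv (U μ) (U ν))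
    (p : ι → ℝ) (hp : ∀ μ, 0 < p μ) (hp1 : ∑ μ, p μ = 1) :
    (rhoG d U p = Matrix.blockDiagonal' (fun μ => ((p μ / (d μ : ℝ) ^ 2 : ℝ) : ℂ) •
        (1 : Matrix (Fin (d μ) × Fin (d μ)) (Fin (d μ) × Fin (d μ)) ℂ)) ∧
      (rhoG d U p).PosDef) ∧
    (∀ S : Matrix (Σ μ, Fin (d μ) × Fin (d μ)) (Σ μ, Fin (d μ) × Fin (d μ)) ℂ,
      S.PosSemidef → S * S * rhoG d U p = 1 →
      (∀ ghat : G, S.mulVec (classOrbit d U p ghat) = (Utilde d U ghat).mulVec (etaVec d)) ∧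
      (∀ ghat : G,
        (Fintype.card G : ℂ)⁻¹ • (Utilde d U ghat
            * Matrix.vecMulVec (etaVec d) (star (etaVec d)) * (Utilde d U ghat)ᴴ)
          = (Fintype.card G : ℂ)⁻¹ • (S
              * Matrix.vecMulVec (classOrbit d U p ghat) (star (classOrbit d U p ghat))
              * S))) := by
  have hrho := rhoG_eq d hd U hirr hineq p hp
  set cfun : (Σ μ, Fin (d μ) × Fin (d μ)) → ℂ :=
    fun q => ((p q.1 / (d q.1 : ℝ) ^ 2 : ℝ) : ℂ) with hcfun
  have hdiag : rhoG d U p = Matrix.diagonal cfun := by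
    rw [hrho,
      show (fun μ => ((p μ / (d μ : ℝ) ^ 2 : ℝ) : ℂ) •
          (1 : Matrix (Fin (d μ) × Fin (d μ)) (Fin (d μ) × Fin (d μ)) ℂ))
        = fun μ => Matrix.diagonal
            (fun _ : Fin (d μ) × Fin (d μ) => ((p μ / (d μ : ℝ) ^ 2 : ℝ) : ℂ))
        from funext fun μ => Matrix.smul_one_eq_diagonal _,
      Matrix.blockDiagonal'_diagonal]
  have hcpos : ∀ q, 0 < cfun q := fun q => by
    have h1 : (0:ℝ) < p q.1 / (d q.1 : ℝ) ^ 2 :=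
      div_pos (hp q.1) (pow_pos (by exact_mod_cast hd q.1) 2)
    exact Complex.zero_lt_real.mpr h1
  refine ⟨⟨hrho, by rw [hdiag]; exact Matrix.PosDef.diagonal hcpos⟩, ?_⟩
  intro S hS hSS
  -- identify S with the explicit diagonal inverse square root
  set s0 : (Σ μ, Fin (d μ) × Fin (d μ)) → ℂ :=
    fun q => (((d q.1 : ℝ) / Real.sqrt (p q.1) : ℝ) : ℂ) with hs0
  have hS0psd : (Matrix.diagonal s0).PosSemidef :=
    Matrix.posSemidef_diagonal_iff.mpr fun q =>
      Complex.zero_le_real.mpr (div_nonneg (Nat.cast_nonneg _) (Real.sqrt_nonneg _))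
  have hsqp : ∀ μ, Real.sqrt (p μ) ≠ 0 := fun μ => (Real.sqrt_pos.mpr (hp μ)).ne'
  have hs0sq : ∀ q, s0 q * s0 q = (cfun q)⁻¹ := fun q => by
    rw [hs0, hcfun]
    rw [← Complex.ofReal_mul, ← Complex.ofReal_inv]
    congr 1
    rw [div_mul_div_comm, Real.mul_self_sqrt (hp q.1).le]
    rw [inv_div]
    ring_nf
  have hinvmul : Matrix.diagonal cfun * Matrix.diagonal (fun q => (cfun q)⁻¹) = 1 := by
    rw [Matrix.diagonal_mul_diagonal,
      show (fun q => cfun q * (cfun q)⁻¹) = fun _ => (1:ℂ) from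
        funext fun q => mul_inv_cancel₀ (hcpos q).ne']
    exact Matrix.diagonal_one
  have hSsq : S * S = Matrix.diagonal (fun q => (cfun q)⁻¹) := by
    calc S * S = S * S * (Matrix.diagonal cfun * Matrix.diagonal (fun q => (cfun q)⁻¹)) := by
          rw [hinvmul, Matrix.mul_one]
      _ = (S * S * rhoG d U p) * Matrix.diagonal (fun q => (cfun q)⁻¹) := by
          rw [hdiag]; simp only [Matrix.mul_assoc]
      _ = Matrix.diagonal (fun q => (cfun q)⁻¹) := by rw [hSS, Matrix.one_mul]
  have hS0sq : Matrix.diagonal s0 * Matrix.diagonal s0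
      = Matrix.diagonal (fun q => (cfun q)⁻¹) := by
    rw [Matrix.diagonal_mul_diagonal]
    exact congrArg Matrix.diagonal (funext hs0sq)
  have hSeq : S = Matrix.diagonal s0 := by
    open MatrixOrder in
    rw [← CFC.sqrt_mul_self S hS.nonneg, ← CFC.sqrt_mul_self (Matrix.diagonal s0) hS0psd.nonneg,
      hSsq, hS0sq]
  have hmain : ∀ ghat : G,
      S.mulVec (classOrbit d U p ghat) = (Utilde d U ghat).mulVec (etaVec d) := by
    intro ghat
    funext q
    obtain ⟨μ, x⟩ := q
    rw [hSeq, Matrix.mulVec_diagonal, classOrbit_apply, etaOrbit_apply]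
    rw [hs0, ← mul_assoc, ← Complex.ofReal_mul]
    congr 2
    rw [Real.sqrt_div (hp μ).le]
    rw [div_mul_div_comm, mul_comm (Real.sqrt (p μ)), mul_div_mul_right _ _ (hsqp μ)]
    exact Real.div_sqrt
  refine ⟨hmain, fun ghat => ?_⟩
  rw [conj_vecMulVec_s17 (Utilde d U ghat) (etaVec d)]
  have hherm : Sᴴ = S := hS.isHermitian
  conv_rhs => rw [show S * Matrix.vecMulVec (classOrbit d U p ghat)
      (star (classOrbit d U p ghat)) * S
    = S * Matrix.vecMulVec (classOrbit d U p ghat) (star (classOrbit d U p ghat)) * Sᴴ from by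
      rw [hherm]]
  rw [conj_vecMulVec_s17 S (classOrbit d U p ghat), hmain ghat]

end Main

end
end
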